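/- arXiv:1111.1396 — 8 statements merged into one kernel-verified Lean document; each statement's English description precedes it below -/
import Mathlib

section
/- Let x ∈ ℝ^n be a k-sparse vector with support set K, let x̂ ∈ ℝ^n be an arbitrary vector, and let L be a k-support of x̂. Then |K ∩ L| ≥ k − W(x, ‖x − x̂‖₁). -/
open Finset

/-- The support of a vector `x : Fin n → ℝ` as a `Finset`. -/
noncomputable def spt {n : ℕ} (x : Fin n → ℝ) : Finset (Fin n) :=
  Finset.univ.filter (fun i => x i ≠ 0)

/-- `W x lam` is the size of the largest subset `S` of the support of `x`
with `‖x_S‖₁ ≤ lam`. -/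
noncomputable def W {n : ℕ} (x : Fin n → ℝ) (lam : ℝ) : ℕ :=
  ((spt x).powerset.filter (fun S => ∑ i ∈ S, |x i| ≤ lam)).sup Finset.card

/-- If `x` is `k`-sparse with support `K` and `L` is a `k`-support of `x̂`, then
`|K ∩ L| ≥ k − W(x, ‖x − x̂‖₁)`. -/
theorem stmt0 {n k : ℕ} (x xhat : Fin n → ℝ) (K L : Finset (Fin n))
    (hK : K = spt x) (hk : K.card = k)
    (hLcard : L.card = k)
    (hLsupp : ∀ i ∈ L, ∀ j ∉ L, |xhat j| ≤ |xhat i|) :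
    (k : ℤ) - (W x (∑ i, |x i - xhat i|) : ℤ) ≤ ((K ∩ L).card : ℤ) := by
  set lam := ∑ i, |x i - xhat i| with hlam
  -- card equality of the two difference sets
  have hcard1 : (K ∩ L).card + (K \ L).card = K.card := Finset.card_inter_add_card_sdiff K L
  have hcard2 : (L ∩ K).card + (L \ K).card = L.card := Finset.card_inter_add_card_sdiff L K
  have hcardeq : (K \ L).card = (L \ K).card := by
    rw [Finset.inter_comm] at hcard2; omega
  -- key sum bound: ∑_{K\L} |x i| ≤ lam
  have hx0 : ∀ j ∉ K, x j = 0 := by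
    intro j hj
    by_contra h
    exact hj (hK ▸ (Finset.mem_filter.mpr ⟨Finset.mem_univ j, h⟩))
  have h2 : ∑ i ∈ K \ L, |xhat i| ≤ ∑ j ∈ L \ K, |xhat j| := by
    rcases Finset.eq_empty_or_nonempty (L \ K) with he | hne
    · have : K \ L = ∅ := Finset.card_eq_zero.mp (by rw [hcardeq, he]; simp)
      rw [this, he]
    · set m := (L \ K).inf' hne (fun j => |xhat j|) with hm
      calc ∑ i ∈ K \ L, |xhat i| ≤ (K \ L).card • m := by
            apply Finset.sum_le_card_nsmul
            intro i hi
            apply Finset.le_inf'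
            intro j hj
            exact hLsupp j (Finset.mem_sdiff.mp hj).1 i (Finset.mem_sdiff.mp hi).2
        _ = (L \ K).card • m := by rw [hcardeq]
        _ ≤ ∑ j ∈ L \ K, |xhat j| := by
            apply Finset.card_nsmul_le_sum
            intro j hj
            exact Finset.inf'_le _ hj
  have h3 : ∑ j ∈ L \ K, |xhat j| = ∑ j ∈ L \ K, |x j - xhat j| := by
    apply Finset.sum_congr rfl
    intro j hj
    rw [hx0 j (Finset.mem_sdiff.mp hj).2, zero_sub, abs_neg]
  have h1 : ∑ i ∈ K \ L, |x i| ≤ ∑ i ∈ K \ L, |x i - xhat i| + ∑ i ∈ K \ L, |xhat i| := by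
    rw [← Finset.sum_add_distrib]
    apply Finset.sum_le_sum
    intro i _
    calc |x i| = |(x i - xhat i) + xhat i| := by ring_nf
      _ ≤ |x i - xhat i| + |xhat i| := abs_add_le _ _
  have hdisj : Disjoint (K \ L) (L \ K) := by simp [Finset.disjoint_left, Finset.mem_sdiff]; tauto
  have h4 : ∑ i ∈ K \ L, |x i - xhat i| + ∑ j ∈ L \ K, |x j - xhat j| ≤ lam := by
    rw [← Finset.sum_union hdisj, hlam]
    apply Finset.sum_le_sum_of_subset_of_nonneg (Finset.subset_univ _)
    intro i _ _
    exact abs_nonneg _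
  have hsum : ∑ i ∈ K \ L, |x i| ≤ lam := by
    calc ∑ i ∈ K \ L, |x i| ≤ ∑ i ∈ K \ L, |x i - xhat i| + ∑ i ∈ K \ L, |xhat i| := h1
      _ ≤ ∑ i ∈ K \ L, |x i - xhat i| + ∑ j ∈ L \ K, |x j - xhat j| := by
          rw [h3] at h2; linarith
      _ ≤ lam := h4
  -- hence (K \ L).card ≤ W x lam
  have hW : (K \ L).card ≤ W x lam := by
    apply Finset.le_sup
    rw [Finset.mem_filter, Finset.mem_powerset]
    exact ⟨hK ▸ Finset.sdiff_subset, hsum⟩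
  omega
end

section
/- Let x ∈ ℝ^n be a k-sparse vector with support set K, and let L ⊆ {1,…,n} be any index set with |L| = k. If e ∈ ℝ^n satisfies max_{i ∈ K∖L} |x_i + e_i| ≤ min_{i ∈ L} |x_i + e_i|, then ‖e‖₁ ≥ ‖x_{K∖L}‖₁. -/
open Finset

/-- If `x` is `k`-sparse with support `K`, `L` is an index set of size `k`, and `e` satisfies
`max_{i ∈ K∖L} |x_i + e_i| ≤ min_{i ∈ L} |x_i + e_i|`, then `‖e‖₁ ≥ ‖x_{K∖L}‖₁`. -/
theorem stmt1 {n k : ℕ} (x e : Fin n → ℝ) (K L : Finset (Fin n))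
    (hK : K = spt x) (hk : K.card = k) (hL : L.card = k)
    (h : ∀ i ∈ K \ L, ∀ j ∈ L, |x i + e i| ≤ |x j + e j|) :
    ∑ i ∈ K \ L, |x i| ≤ ∑ i, |e i| := by
  have hcard : (K \ L).card = (L \ K).card := by
    have h1 : (K \ L).card + (K ∩ L).card = K.card := Finset.card_sdiff_add_card_inter K L
    have h2 : (L \ K).card + (L ∩ K).card = L.card := Finset.card_sdiff_add_card_inter L K
    rw [Finset.inter_comm] at h2
    omega
  have hx0 : ∀ j ∈ L \ K, x j = 0 := by
    intro j hj
    have := (Finset.mem_sdiff.mp hj).2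
    rw [hK] at this
    simpa [spt] using this
  -- Step 1: sum over K\L of |x+e| ≤ sum over L\K of |x+e| = sum over L\K of |e|
  have hbij : ∑ i ∈ K \ L, |x i + e i| ≤ ∑ j ∈ L \ K, |e j| := by
    have heq : ∑ j ∈ L \ K, |e j| = ∑ j ∈ L \ K, |x j + e j| := by
      apply Finset.sum_congr rfl
      intro j hj
      rw [hx0 j hj, zero_add]
    rw [heq]
    let σ := Finset.equivOfCardEq hcard
    calc ∑ i ∈ K \ L, |x i + e i|
        = ∑ i ∈ (K \ L).attach, |x i.1 + e i.1| := (Finset.sum_attach _ _).symm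
      _ = ∑ j ∈ (L \ K).attach, |x (σ.symm j).1 + e (σ.symm j).1| := by
          exact Equiv.sum_comp σ.symm (fun i => |x i.1 + e i.1|) |>.symm
      _ ≤ ∑ j ∈ (L \ K).attach, |x j.1 + e j.1| := by
          apply Finset.sum_le_sum
          intro j _
          exact h _ (σ.symm j).2 j.1 (Finset.mem_sdiff.mp j.2).1
      _ = ∑ j ∈ L \ K, |x j + e j| := Finset.sum_attach _ fun j => |x j + e j|
  have htri : ∑ i ∈ K \ L, |x i| ≤ ∑ i ∈ K \ L, (|x i + e i| + |e i|) := by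
    apply Finset.sum_le_sum
    intro i _
    calc |x i| = |(x i + e i) + (-e i)| := by ring_nf
      _ ≤ |x i + e i| + |(-e i)| := abs_add_le _ _
      _ = |x i + e i| + |e i| := by rw [abs_neg]
  rw [Finset.sum_add_distrib] at htri
  have hdisj : Disjoint (L \ K) (K \ L) := by
    rw [Finset.disjoint_left]
    intro i hi hi'
    simp only [Finset.mem_sdiff] at hi hi'
    tauto
  have hfin : ∑ j ∈ L \ K, |e j| + ∑ i ∈ K \ L, |e i| ≤ ∑ i, |e i| := by
    rw [← Finset.sum_union hdisj]
    apply Finset.sum_le_sum_of_subset_of_nonneg (Finset.subset_univ _)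
    intro i _ _
    exact abs_nonneg _
  linarith
end

section
/- Let A be a real m×n matrix, S ⊆ {1,…,n}, C > 1, κ ≥ 0, and x, x̂ ∈ ℝ^n. Assume: (i) A x̂ = A x; (ii) ‖x̂‖₁ ≤ ‖x‖₁; (iii) ‖x_S‖₁ − ‖x̂_S‖₁ ≤ (2/(C−1)) ‖x_{S̄}‖₁; and (iv) every w ∈ ℝ^n with A w = 0 satisfies ‖w_S‖₁ ≤ κ ‖w_{S̄}‖₁. Then ‖x − x̂‖₁ ≤ (2C(1+κ)/(C−1)) ‖x_{S̄}‖₁. -/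
open Finset

/-- Weak robustness implies the bound `‖x − x̂‖₁ ≤ (2C(1+κ)/(C−1)) ‖x_{S̄}‖₁`. -/
theorem stmt2 {m n : ℕ} (A : Matrix (Fin m) (Fin n) ℝ) (S : Finset (Fin n))
    (C κ : ℝ) (hC : 1 < C) (hκ : 0 ≤ κ) (x xhat : Fin n → ℝ)
    (h1 : A.mulVec xhat = A.mulVec x)
    (h2 : ∑ i, |xhat i| ≤ ∑ i, |x i|)
    (h3 : ∑ i ∈ S, |x i| - ∑ i ∈ S, |xhat i| ≤ (2 / (C - 1)) * ∑ i ∈ Sᶜ, |x i|)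
    (h4 : ∀ w : Fin n → ℝ, A.mulVec w = 0 →
      ∑ i ∈ S, |w i| ≤ κ * ∑ i ∈ Sᶜ, |w i|) :
    ∑ i, |x i - xhat i| ≤ (2 * C * (1 + κ) / (C - 1)) * ∑ i ∈ Sᶜ, |x i| := by
  set w : Fin n → ℝ := fun i => x i - xhat i with hw
  have hAw : A.mulVec w = 0 := by
    have hws : w = x - xhat := rfl
    rw [hws, Matrix.mulVec_sub, h1, sub_self]
  have huv := h4 w hAw
  set a := ∑ i ∈ S, |x i|
  set b := ∑ i ∈ Sᶜ, |x i|
  set a' := ∑ i ∈ S, |xhat i|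
  set b' := ∑ i ∈ Sᶜ, |xhat i|
  set u := ∑ i ∈ S, |w i|
  set v := ∑ i ∈ Sᶜ, |w i|
  have hsplitx : ∑ i, |x i| = a + b := (Finset.sum_add_sum_compl S _).symm
  have hsplitx' : ∑ i, |xhat i| = a' + b' := (Finset.sum_add_sum_compl S _).symm
  have hsplitw : ∑ i, |w i| = u + v := (Finset.sum_add_sum_compl S _).symm
  have hgoal : (∑ i, |x i - xhat i|) = u + v := hsplitw
  have htri : v ≤ b + b' := by
    rw [← Finset.sum_add_distrib]
    exact Finset.sum_le_sum fun i _ => abs_sub (x i) (xhat i)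
  have h2' : a' + b' ≤ a + b := by rw [← hsplitx, ← hsplitx']; exact h2
  have hb : 0 ≤ b := Finset.sum_nonneg fun i _ => abs_nonneg _
  have hv : 0 ≤ v := Finset.sum_nonneg fun i _ => abs_nonneg _
  have hC1 : 0 < C - 1 := by linarith
  rw [hgoal]
  rw [div_mul_eq_mul_div] at h3
  rw [div_mul_eq_mul_div, le_div_iff₀ hC1]
  rw [le_div_iff₀ hC1] at h3
  nlinarith [mul_nonneg hκ hv, mul_nonneg hκ hb, mul_le_mul_of_nonneg_left htri hκ,
    mul_le_mul_of_nonneg_left h2' hκ]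
end

section
/- Let X_1, X_2, …, X_N be i.i.d. standard normal N(0,1) random variables, let S_N = ∑_{i=1}^N |X_i|, and for 1 ≤ M < N let S_M be the sum of the M largest values among |X_1|,…,|X_N|. Fix γ ∈ (0,1) and set M = ⌊γN⌋. Then for every sufficiently small ε > 0, as N → ∞: P(|S_N/N − √(2/π)| > ε) → 0, and P(|S_M/S_N − exp(−Ψ(γ/2)²/2)| > ε) → 0. -/
open Finset MeasureTheory ProbabilityTheory Filter
open scoped ENNReal NNReal Real

/-- The standard Gaussian upper tail function `Q`. -/
noncomputable def gaussQ (x : ℝ) : ℝ :=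
  (Real.sqrt (2 * Real.pi))⁻¹ * ∫ y in Set.Ioi x, Real.exp (-(y ^ 2) / 2)

/-- `topSum N M y` is the sum of the `M` largest values among `y 0, …, y (N-1)`
(for nonnegative `y`, realized as the maximum of `∑_{i ∈ T} y i` over `M`-subsets
`T` of `{0, …, N-1}`). -/
noncomputable def topSum (N M : ℕ) (y : ℕ → ℝ) : ℝ :=
  if h : ((Finset.range N).powersetCard M).Nonempty then
    ((Finset.range N).powersetCard M).sup' h (fun T => ∑ i ∈ T, y i)
  else 0




lemma integrable_expq : Integrable (fun x : ℝ => Real.exp (-(x^2)/2)) := by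
  have := integrable_exp_neg_mul_sq (b := (1/2:ℝ)) (by norm_num)
  convert this using 2 with x
  ring_nf

lemma integrable_mul_expq : Integrable (fun x : ℝ => x * Real.exp (-(x^2)/2)) := by
  have := integrable_mul_exp_neg_mul_sq (b := (1/2:ℝ)) (by norm_num)
  convert this using 2 with x
  ring_nf

lemma J_eq {t : ℝ} : ∫ x in Set.Ioi t, x * Real.exp (-(x^2)/2) = Real.exp (-(t^2)/2) := by
  have h : ∀ x ∈ Set.Ici t, HasDerivAt (fun y : ℝ => -Real.exp (-(y^2)/2)) (x * Real.exp (-(x^2)/2)) x := by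
    intro x _
    have : HasDerivAt (fun y : ℝ => -(y^2)/2) (-x) x := by
      have := ((hasDerivAt_pow 2 x).neg).div_const 2
      simpa using this.congr_deriv (by ring)
    have := (this.exp).neg
    exact this.congr_deriv (by ring)
  have htend : Tendsto (fun y : ℝ => -Real.exp (-(y^2)/2)) atTop (nhds 0) := by
    have h0 : Tendsto (fun y : ℝ => y^2) atTop atTop := tendsto_pow_atTop two_ne_zero
    have h1 : Tendsto (fun y : ℝ => -(y^2)/2) atTop atBot :=
      Tendsto.atBot_div_const (by norm_num) (tendsto_neg_atBot_iff.2 h0)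
    have := (Real.tendsto_exp_atBot.comp h1).neg
    simpa using this
  have := integral_Ioi_of_hasDerivAt_of_tendsto' (m := 0) h (integrable_mul_expq.integrableOn) htend
  simpa using this

lemma integrableOn_mul_expq {t : ℝ} : IntegrableOn (fun x : ℝ => x * Real.exp (-(x^2)/2)) (Set.Ioi t) :=
  integrable_mul_expq.integrableOn

lemma sqrt2pi_pos : 0 < Real.sqrt (2 * Real.pi) := Real.sqrt_pos.2 (by positivity)

lemma gaussQ_strictAnti {s t : ℝ} (h : s < t) : gaussQ t < gaussQ s := by
  unfold gaussQ
  have hint : IntegrableOn (fun y : ℝ => Real.exp (-(y^2)/2)) (Set.Ioi s) := integrable_expq.integrableOn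
  have hsplit : (Set.Ioc s t) ∪ (Set.Ioi t) = Set.Ioi s := Set.Ioc_union_Ioi_eq_Ioi h.le
  have hdisj : Disjoint (Set.Ioc s t) (Set.Ioi t) := Set.Ioc_disjoint_Ioi le_rfl
  have h1 : ∫ y in Set.Ioi s, Real.exp (-(y^2)/2)
      = (∫ y in Set.Ioc s t, Real.exp (-(y^2)/2)) + ∫ y in Set.Ioi t, Real.exp (-(y^2)/2) := by
    rw [← setIntegral_union hdisj measurableSet_Ioi integrable_expq.integrableOn integrable_expq.integrableOn, hsplit]
  have h2 : 0 < ∫ y in Set.Ioc s t, Real.exp (-(y^2)/2) := by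
    rw [← intervalIntegral.integral_of_le h.le]
    apply intervalIntegral.intervalIntegral_pos_of_pos_on
    · exact integrable_expq.intervalIntegrable
    · intro x _; positivity
    · exact h
  have hc : 0 < (Real.sqrt (2 * Real.pi))⁻¹ := inv_pos.2 sqrt2pi_pos
  have := mul_lt_mul_of_pos_left (by linarith : (∫ y in Set.Ioi t, Real.exp (-(y^2)/2)) < ∫ y in Set.Ioi s, Real.exp (-(y^2)/2)) hc
  convert this using 3 <;> ring_nf

lemma gaussQ_zero : gaussQ 0 = 1/2 := by
  unfold gaussQ
  have h : ∀ y : ℝ, Real.exp (-(y^2)/2) = Real.exp (-(1/2 : ℝ) * y^2) := by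
    intro y; ring_nf
  have : ∫ y in Set.Ioi (0:ℝ), Real.exp (-(y^2)/2) = Real.sqrt (Real.pi / (1/2)) / 2 := by
    simp_rw [h]
    exact integral_gaussian_Ioi (1/2)
  rw [this]
  have hπ : Real.pi / (1/2 : ℝ) = 2 * Real.pi := by ring
  rw [hπ]
  field_simp

lemma gaussianPDFReal_01 (x : ℝ) :
    gaussianPDFReal 0 1 x = (Real.sqrt (2 * Real.pi))⁻¹ * Real.exp (-(x^2)/2) := by
  unfold gaussianPDFReal
  norm_num

lemma integral_gaussianReal_eq (g : ℝ → ℝ) :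
    ∫ x, g x ∂(gaussianReal 0 1) =
      ∫ x, g x * ((Real.sqrt (2 * Real.pi))⁻¹ * Real.exp (-(x^2)/2)) := by
  rw [gaussianReal_of_var_ne_zero _ one_ne_zero]
  have hpdf : (gaussianPDF 0 1) = fun x => ((gaussianPDFReal 0 1 x).toNNReal : ℝ≥0∞) := rfl
  rw [hpdf, integral_withDensity_eq_integral_smul ((measurable_gaussianPDFReal 0 1).real_toNNReal) g]
  congr 1
  funext x
  rw [NNReal.smul_def, Real.coe_toNNReal _ (gaussianPDFReal_nonneg 0 1 x), smul_eq_mul,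
    gaussianPDFReal_01, mul_comm]

lemma integrable_gaussianReal_iff (g : ℝ → ℝ) :
    Integrable g (gaussianReal 0 1) ↔
      Integrable (fun x => g x * ((Real.sqrt (2 * Real.pi))⁻¹ * Real.exp (-(x^2)/2))) := by
  rw [gaussianReal_of_var_ne_zero _ one_ne_zero]
  rw [integrable_withDensity_iff (measurable_gaussianPDF 0 1) (Eventually.of_forall fun x => ENNReal.ofReal_lt_top)]
  have : ∀ x : ℝ, (gaussianPDF 0 1 x).toReal = (Real.sqrt (2 * Real.pi))⁻¹ * Real.exp (-(x^2)/2) := by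
    intro x
    rw [gaussianPDF, ENNReal.toReal_ofReal (gaussianPDFReal_nonneg 0 1 x), gaussianPDFReal_01]
  simp_rw [this]

lemma sqrt_two_div_pi : 2 * (Real.sqrt (2 * Real.pi))⁻¹ = Real.sqrt (2 / Real.pi) := by
  have key : Real.sqrt (2 / Real.pi) * Real.sqrt (2 * Real.pi) = 2 := by
    rw [← Real.sqrt_mul (by positivity)]
    have : 2 / Real.pi * (2 * Real.pi) = 4 := by
      field_simp
      ring
    rw [this, show (4:ℝ) = 2^2 by norm_num, Real.sqrt_sq (by norm_num)]
  have h2 := sqrt2pi_pos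
  field_simp at key ⊢
  nlinarith [key, Real.sq_sqrt (le_of_lt Real.pi_pos), Real.sqrt_nonneg (2/Real.pi), Real.sqrt_nonneg (2*Real.pi)]

lemma E_abs : ∫ x, |x| ∂(gaussianReal 0 1) = Real.sqrt (2 / Real.pi) := by
  rw [integral_gaussianReal_eq]
  have h1 : (fun x : ℝ => |x| * ((Real.sqrt (2 * Real.pi))⁻¹ * Real.exp (-(x^2)/2)))
      = fun x => (fun u : ℝ => u * ((Real.sqrt (2 * Real.pi))⁻¹ * Real.exp (-(u^2)/2))) |x| := by
    funext x; simp [sq_abs]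
  rw [h1, integral_comp_abs (f := fun u : ℝ => u * ((Real.sqrt (2 * Real.pi))⁻¹ * Real.exp (-(u^2)/2)))]
  have h2 : ∀ x : ℝ, x * ((Real.sqrt (2 * Real.pi))⁻¹ * Real.exp (-(x^2)/2))
      = (Real.sqrt (2 * Real.pi))⁻¹ * (x * Real.exp (-(x^2)/2)) := fun x => by ring
  simp_rw [h2]
  rw [integral_const_mul, J_eq]
  have h3 : Real.exp (-((0:ℝ)^2)/2) = 1 := by norm_num
  rw [h3, mul_one, ← sqrt_two_div_pi]

lemma E_tail {t : ℝ} (ht : 0 ≤ t) :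
    ∫ x, (if t < |x| then |x| else 0) ∂(gaussianReal 0 1)
      = Real.sqrt (2 / Real.pi) * Real.exp (-(t^2)/2) := by
  rw [integral_gaussianReal_eq]
  have h1 : (fun x : ℝ => (if t < |x| then |x| else 0) * ((Real.sqrt (2 * Real.pi))⁻¹ * Real.exp (-(x^2)/2)))
      = fun x => Set.indicator (Set.Ioi t) (fun u : ℝ => u * ((Real.sqrt (2 * Real.pi))⁻¹ * Real.exp (-(u^2)/2))) |x| := by
    funext x
    simp only [Set.indicator_apply, Set.mem_Ioi, ite_mul, zero_mul, sq_abs]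
  rw [h1, integral_comp_abs, setIntegral_indicator measurableSet_Ioi]
  rw [Set.Ioi_inter_Ioi, max_eq_right ht]
  have h2 : ∀ x : ℝ, x * ((Real.sqrt (2 * Real.pi))⁻¹ * Real.exp (-(x^2)/2))
      = (Real.sqrt (2 * Real.pi))⁻¹ * (x * Real.exp (-(x^2)/2)) := fun x => by ring
  simp_rw [h2]
  rw [integral_const_mul, J_eq, ← sqrt_two_div_pi]
  ring

lemma E_ind {t : ℝ} (ht : 0 ≤ t) :
    ∫ x, (if t < |x| then (1:ℝ) else 0) ∂(gaussianReal 0 1) = 2 * gaussQ t := by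
  rw [integral_gaussianReal_eq]
  have h1 : (fun x : ℝ => (if t < |x| then (1:ℝ) else 0) * ((Real.sqrt (2 * Real.pi))⁻¹ * Real.exp (-(x^2)/2)))
      = fun x => Set.indicator (Set.Ioi t) (fun u : ℝ => (Real.sqrt (2 * Real.pi))⁻¹ * Real.exp (-(u^2)/2)) |x| := by
    funext x
    simp only [Set.indicator_apply, Set.mem_Ioi, ite_mul, zero_mul, one_mul, sq_abs]
  rw [h1, integral_comp_abs, setIntegral_indicator measurableSet_Ioi]
  rw [Set.Ioi_inter_Ioi, max_eq_right ht, integral_const_mul]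
  unfold gaussQ
  ring_nf

lemma int_abs : Integrable (fun x : ℝ => |x|) (gaussianReal 0 1) := by
  rw [integrable_gaussianReal_iff]
  have base : Integrable (fun x : ℝ => (Real.sqrt (2 * Real.pi))⁻¹ * (x * Real.exp (-(x^2)/2))) :=
    integrable_mul_expq.const_mul _
  refine base.abs.congr (Eventually.of_forall fun x => ?_)
  show |(Real.sqrt (2 * Real.pi))⁻¹ * (x * Real.exp (-(x^2)/2))| = _
  rw [abs_mul, abs_of_nonneg (by positivity : (0:ℝ) ≤ (Real.sqrt (2 * Real.pi))⁻¹), abs_mul,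
    abs_of_nonneg (Real.exp_nonneg _)]
  ring

lemma int_bound {g : ℝ → ℝ} (hg : Measurable g) (hb : ∀ x, ‖g x‖ ≤ |x| + 1) :
    Integrable g (gaussianReal 0 1) := by
  refine Integrable.mono' (int_abs.add (integrable_const 1)) hg.aestronglyMeasurable
    (ae_of_all _ hb)

lemma meas_tail (t : ℝ) : Measurable (fun x : ℝ => if t < |x| then |x| else 0) :=
  Measurable.ite (measurableSet_lt measurable_const measurable_abs) measurable_abs measurable_const

lemma meas_ind (t : ℝ) : Measurable (fun x : ℝ => if t < |x| then (1:ℝ) else 0) :=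
  Measurable.ite (measurableSet_lt measurable_const measurable_abs) measurable_const measurable_const

lemma meas_pos (t : ℝ) : Measurable (fun x : ℝ => max (|x| - t) 0) :=
  (measurable_abs.sub measurable_const).max measurable_const

lemma int_tail (t : ℝ) : Integrable (fun x : ℝ => if t < |x| then |x| else 0) (gaussianReal 0 1) := by
  refine int_bound (meas_tail t) fun x => ?_
  rw [Real.norm_eq_abs]
  split <;> simp [abs_abs] <;> positivity

lemma int_ind (t : ℝ) : Integrable (fun x : ℝ => if t < |x| then (1:ℝ) else 0) (gaussianReal 0 1) := by
  refine int_bound (meas_ind t) fun x => ?_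
  rw [Real.norm_eq_abs]
  split <;> simp <;> positivity

lemma int_pos (t : ℝ) (ht : 0 ≤ t) : Integrable (fun x : ℝ => max (|x| - t) 0) (gaussianReal 0 1) := by
  refine int_bound (meas_pos t) fun x => ?_
  rw [Real.norm_eq_abs, abs_of_nonneg (le_max_right _ _)]
  have : |x| - t ≤ |x| + 1 := by linarith
  have h0 : (0:ℝ) ≤ |x| + 1 := by positivity
  exact max_le this h0

lemma E_pos {t : ℝ} (ht : 0 ≤ t) :
    ∫ x, max (|x| - t) 0 ∂(gaussianReal 0 1)
      = Real.sqrt (2 / Real.pi) * Real.exp (-(t^2)/2) - t * (2 * gaussQ t) := by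
  have hpt : (fun x : ℝ => max (|x| - t) 0)
      = fun x => (if t < |x| then |x| else 0) - t * (if t < |x| then (1:ℝ) else 0) := by
    funext x
    by_cases h : t < |x|
    · simp [h, max_eq_left (by linarith : (0:ℝ) ≤ |x| - t)]
    · push_neg at h
      simp [not_lt.2 h, max_eq_right (by linarith : |x| - t ≤ 0)]
  rw [hpt]
  rw [integral_sub (int_tail t) ((int_ind t).const_mul t), integral_const_mul, E_tail ht, E_ind ht]

lemma powersetCard_nonempty_range {N M : ℕ} (h : M ≤ N) :
    ((Finset.range N).powersetCard M).Nonempty := by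
  rw [Finset.powersetCard_nonempty]
  simpa using h

lemma topSum_le {N M : ℕ} (h : M ≤ N) (t : ℝ) (y : ℕ → ℝ) :
    topSum N M y ≤ M * t + ∑ i ∈ Finset.range N, max (y i - t) 0 := by
  rw [topSum, dif_pos (powersetCard_nonempty_range h)]
  rw [Finset.sup'_le_iff]
  intro T hT
  rw [Finset.mem_powersetCard] at hT
  obtain ⟨hsub, hcard⟩ := hT
  calc ∑ i ∈ T, y i ≤ ∑ i ∈ T, (t + max (y i - t) 0) := by
        refine Finset.sum_le_sum fun i _ => ?_
        have := le_max_left (y i - t) 0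
        linarith
    _ = T.card * t + ∑ i ∈ T, max (y i - t) 0 := by
        rw [Finset.sum_add_distrib, Finset.sum_const, nsmul_eq_mul]
    _ ≤ M * t + ∑ i ∈ Finset.range N, max (y i - t) 0 := by
        rw [hcard]
        have := Finset.sum_le_sum_of_subset_of_nonneg hsub (fun i _ _ => le_max_right (y i - t) 0)
        linarith

lemma le_topSum {N M : ℕ} (h : M ≤ N) {y : ℕ → ℝ} (hy : ∀ i, 0 ≤ y i)
    {T : Finset ℕ} (hT : T ⊆ Finset.range N) (hTc : T.card ≤ M) :
    ∑ i ∈ T, y i ≤ topSum N M y := by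
  obtain ⟨U, hTU, hUr, hUc⟩ := Finset.exists_subsuperset_card_eq hT hTc (by simpa using h)
  rw [topSum, dif_pos (powersetCard_nonempty_range h)]
  calc ∑ i ∈ T, y i ≤ ∑ i ∈ U, y i :=
        Finset.sum_le_sum_of_subset_of_nonneg hTU fun i _ _ => hy i
    _ ≤ _ := Finset.le_sup' (fun T => ∑ i ∈ T, y i) (Finset.mem_powersetCard.2 ⟨hUr, hUc⟩)

lemma measurable_topSum {Ω : Type*} [MeasurableSpace Ω] (N M : ℕ) (X : ℕ → Ω → ℝ)
    (hX : ∀ i, Measurable (X i)) :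
    Measurable (fun ω => topSum N M (fun i => |X i ω|)) := by
  unfold topSum
  split
  · next h =>
    refine Finset.Nonempty.cons_induction (motive := fun s hs =>
        Measurable (fun ω => s.sup' hs (fun T => ∑ i ∈ T, |X i ω|))) ?_ ?_ h
    · intro T
      have he : (fun ω => ({T} : Finset (Finset ℕ)).sup' (Finset.singleton_nonempty T)
          (fun S => ∑ i ∈ S, |X i ω|)) = fun ω => ∑ i ∈ T, |X i ω| := by
        funext ω; exact Finset.sup'_singleton ..
      rw [he]
      exact Finset.measurable_sum _ (fun i _ => (hX i).abs)
    · intro T s hTs hs ih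
      have he : (fun ω => (Finset.cons T s hTs).sup' (Finset.cons_nonempty hTs)
          (fun S => ∑ i ∈ S, |X i ω|)) = fun ω => max (∑ i ∈ T, |X i ω|)
            (s.sup' hs (fun S => ∑ i ∈ S, |X i ω|)) := by
        funext ω; exact Finset.sup'_cons ..
      rw [he]
      exact (Finset.measurable_sum _ (fun i _ => (hX i).abs)).max ih
  · exact measurable_const

lemma lln {Ω : Type*} [MeasurableSpace Ω] (μ : Measure Ω) [IsProbabilityMeasure μ]
    (X : ℕ → Ω → ℝ) (hmeas : ∀ i, Measurable (X i))
    (hindep : iIndepFun X μ)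
    (hdist : ∀ i, Measure.map (X i) μ = gaussianReal 0 1)
    (g : ℝ → ℝ) (hg : Measurable g) (hint : Integrable g (gaussianReal 0 1)) :
    ∀ᵐ ω ∂μ, Tendsto (fun n : ℕ => (∑ i ∈ Finset.range n, g (X i ω)) / n) atTop
      (nhds (∫ x, g x ∂(gaussianReal 0 1))) := by
  set Y : ℕ → Ω → ℝ := fun i ω => g (X i ω) with hY
  have hYmeas : ∀ i, Measurable (Y i) := fun i => hg.comp (hmeas i)
  have hmap : ∀ i, Measure.map (Y i) μ = Measure.map g (gaussianReal 0 1) := fun i => by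
    rw [← hdist i]
    exact (Measure.map_map hg (hmeas i)).symm
  have hident : ∀ i, IdentDistrib (Y i) (Y 0) μ μ := fun i =>
    ⟨(hYmeas i).aemeasurable, (hYmeas 0).aemeasurable, by rw [hmap i, hmap 0]⟩
  have hint0 : Integrable (Y 0) μ := by
    have h1 : Integrable g (Measure.map (X 0) μ) := by rw [hdist 0]; exact hint
    exact (integrable_map_measure hg.aestronglyMeasurable (hmeas 0).aemeasurable).1 h1
  have hpind : Pairwise (Function.onFun (IndepFun · · μ) Y) := fun i j hij =>
    (hindep.indepFun hij).comp hg hg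
  have hE : μ[Y 0] = ∫ x, g x ∂(gaussianReal 0 1) := by
    rw [← hdist 0, integral_map (hmeas 0).aemeasurable]
    exact hg.aestronglyMeasurable
  have hlln := strong_law_ae Y hint0 hpind hident
  filter_upwards [hlln] with ω hω
  rw [← hE]
  refine hω.congr fun n => ?_
  rw [smul_eq_mul, inv_mul_eq_div]

lemma floor_div_tendsto {γ : ℝ} (hγ : 0 ≤ γ) :
    Tendsto (fun N : ℕ => (⌊γ * N⌋₊ : ℝ) / N) atTop (nhds γ) := by
  have hlow : Tendsto (fun N : ℕ => γ - 1 / (N:ℝ)) atTop (nhds γ) := by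
    have := tendsto_one_div_atTop_nhds_zero_nat (𝕜 := ℝ)
    simpa using tendsto_const_nhds.sub this
  refine tendsto_of_tendsto_of_tendsto_of_le_of_le' hlow tendsto_const_nhds ?_ ?_
  · filter_upwards [eventually_ge_atTop 1] with N hN
    have hN0 : (0:ℝ) < N := by exact_mod_cast hN
    rw [sub_le_iff_le_add, ← add_div, le_div_iff₀ hN0]
    have h1 : γ * N < ⌊γ * N⌋₊ + 1 := Nat.lt_floor_add_one _
    linarith
  · filter_upwards [eventually_ge_atTop 1] with N hN
    have hN0 : (0:ℝ) < N := by exact_mod_cast hN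
    rw [div_le_iff₀ hN0]
    have h1 : (⌊γ * N⌋₊ : ℝ) ≤ γ * N := Nat.floor_le (by positivity)
    linarith

lemma floor_le_self {γ : ℝ} (hγ1 : γ ≤ 1) (N : ℕ) : ⌊γ * N⌋₊ ≤ N := by
  have : γ * N ≤ (N : ℝ) := by nlinarith [Nat.cast_nonneg (α := ℝ) N]
  calc ⌊γ * N⌋₊ ≤ ⌊(N:ℝ)⌋₊ := Nat.floor_mono this
    _ = N := Nat.floor_natCast N

example (a b : ℝ) {n : ℝ} (hn : n ≠ 0) : (a / n) / (b / n) = a / b := by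
  rcases eq_or_ne b 0 with rfl | hb
  · simp
  · field_simp



/-- Concentration of the partial sums of order statistics of i.i.d. standard Gaussians:
with `M = ⌊γN⌋`, `S_N/N → √(2/π)` and `S_M/S_N → exp(−Ψ(γ/2)²/2)` in probability. -/
theorem stmt5 {Ω : Type*} [MeasurableSpace Ω] (μ : Measure Ω) [IsProbabilityMeasure μ]
    (X : ℕ → Ω → ℝ) (hmeas : ∀ i, Measurable (X i))
    (hindep : iIndepFun X μ)
    (hdist : ∀ i, Measure.map (X i) μ = gaussianReal 0 1)
    (γ : ℝ) (hγ : γ ∈ Set.Ioo (0 : ℝ) 1)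
    (a : ℝ) (ha : gaussQ a = γ / 2) :
    ∃ ε₀ > 0, ∀ ε : ℝ, 0 < ε → ε < ε₀ →
      (Tendsto
          (fun N => μ {ω | |(∑ i ∈ Finset.range N, |X i ω|) / N - Real.sqrt (2 / Real.pi)| > ε})
          atTop (nhds 0)
        ∧ Tendsto
          (fun N => μ {ω | |topSum N ⌊γ * N⌋₊ (fun i => |X i ω|) /
              (∑ i ∈ Finset.range N, |X i ω|) - Real.exp (-(a ^ 2) / 2)| > ε})
          atTop (nhds 0)) := by
  obtain ⟨hγ0, hγ1⟩ := hγ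
  have hπ := Real.pi_pos
  have hm0 : 0 < Real.sqrt (2 / Real.pi) := Real.sqrt_pos.2 (by positivity)
  set m := Real.sqrt (2 / Real.pi) with hm
  have ha0 : 0 < a := by
    by_contra hcon
    push_neg at hcon
    have h1 : gaussQ 0 ≤ gaussQ a := by
      rcases eq_or_lt_of_le hcon with h | h
      · rw [h]
      · exact (gaussQ_strictAnti h).le
    rw [gaussQ_zero, ha] at h1
    linarith
  set t : ℕ → ℝ := fun k => a + ((k : ℝ) + 1)⁻¹ with htdef
  have htk_gt : ∀ k, a < t k := by
    intro k
    have h1 : (0:ℝ) < ((k:ℝ) + 1)⁻¹ := by positivity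
    simp only [htdef]
    linarith
  have htk_pos : ∀ k, (0:ℝ) ≤ t k := fun k => (lt_trans ha0 (htk_gt k)).le
  have htq : ∀ k, 2 * gaussQ (t k) < γ := by
    intro k
    have h1 := gaussQ_strictAnti (htk_gt k)
    rw [ha] at h1
    linarith
  have htkto : Tendsto t atTop (nhds a) := by
    have h1 : Tendsto (fun k : ℕ => ((k:ℝ) + 1)⁻¹) atTop (nhds 0) := by
      have := tendsto_one_div_add_atTop_nhds_zero_nat (𝕜 := ℝ)
      simpa [one_div] using this
    have h2 : Tendsto (fun k : ℕ => a + ((k:ℝ) + 1)⁻¹) atTop (nhds (a + 0)) :=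
      Tendsto.add tendsto_const_nhds h1
    simpa using h2
  have hLto : Tendsto (fun k => m * Real.exp (-(t k ^ 2) / 2)) atTop
      (nhds (m * Real.exp (-(a ^ 2) / 2))) := by
    have hcont : Continuous (fun u : ℝ => m * Real.exp (-(u ^ 2) / 2)) := by continuity
    exact (hcont.tendsto a).comp htkto
  -- a.e. convergences
  have h0 : ∀ᵐ ω ∂μ, Tendsto (fun N : ℕ => (∑ i ∈ Finset.range N, |X i ω|) / N) atTop (nhds m) := by
    have := lln μ X hmeas hindep hdist (fun x => |x|) measurable_abs int_abs
    rw [show (∫ x, |x| ∂(gaussianReal 0 1)) = m from E_abs] at this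
    exact this
  have h1 : ∀ᵐ ω ∂μ, Tendsto (fun N : ℕ => (∑ i ∈ Finset.range N, max (|X i ω| - a) 0) / N)
      atTop (nhds (m * Real.exp (-(a ^ 2) / 2) - a * γ)) := by
    have := lln μ X hmeas hindep hdist (fun x => max (|x| - a) 0) (meas_pos a) (int_pos a ha0.le)
    rw [show (∫ x, max (|x| - a) 0 ∂(gaussianReal 0 1)) = m * Real.exp (-(a ^ 2) / 2) - a * γ by
      rw [E_pos ha0.le, ha]; ring] at this
    exact this
  have h2 : ∀ᵐ ω ∂μ, ∀ k, Tendsto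
      (fun N : ℕ => (∑ i ∈ Finset.range N, (if t k < |X i ω| then |X i ω| else 0)) / N)
      atTop (nhds (m * Real.exp (-(t k ^ 2) / 2))) := by
    rw [ae_all_iff]
    intro k
    have := lln μ X hmeas hindep hdist (fun x => if t k < |x| then |x| else 0)
      (meas_tail (t k)) (int_tail (t k))
    rw [show (∫ x, (if t k < |x| then |x| else 0) ∂(gaussianReal 0 1))
        = m * Real.exp (-(t k ^ 2) / 2) from E_tail (htk_pos k)] at this
    exact this
  have h3 : ∀ᵐ ω ∂μ, ∀ k, Tendsto
      (fun N : ℕ => (∑ i ∈ Finset.range N, (if t k < |X i ω| then (1:ℝ) else 0)) / N)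
      atTop (nhds (2 * gaussQ (t k))) := by
    rw [ae_all_iff]
    intro k
    have := lln μ X hmeas hindep hdist (fun x => if t k < |x| then (1:ℝ) else 0)
      (meas_ind (t k)) (int_ind (t k))
    rw [show (∫ x, (if t k < |x| then (1:ℝ) else 0) ∂(gaussianReal 0 1))
        = 2 * gaussQ (t k) from E_ind (htk_pos k)] at this
    exact this
  -- key a.e. convergence of the ratio
  have key : ∀ᵐ ω ∂μ, Tendsto
      (fun N : ℕ => topSum N ⌊γ * N⌋₊ (fun i => |X i ω|) / (∑ i ∈ Finset.range N, |X i ω|))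
      atTop (nhds (Real.exp (-(a ^ 2) / 2))) := by
    filter_upwards [h0, h1, h2, h3] with ω T0 T1 T2 T3
    have claimA : Tendsto (fun N : ℕ => topSum N ⌊γ * N⌋₊ (fun i => |X i ω|) / N) atTop
        (nhds (m * Real.exp (-(a ^ 2) / 2))) := by
      rw [tendsto_order]
      constructor
      · -- lower bound
        intro b hb
        obtain ⟨k, hk⟩ := (hLto.eventually (eventually_gt_nhds hb)).exists
        have hq := htq k
        have ev1 : ∀ᶠ N : ℕ in atTop,
            ((Finset.range N).filter (fun i => t k < |X i ω|)).card ≤ ⌊γ * N⌋₊ := by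
          have hev1 : ∀ᶠ N : ℕ in atTop,
              (∑ i ∈ Finset.range N, (if t k < |X i ω| then (1:ℝ) else 0)) / N
                < (2 * gaussQ (t k) + γ) / 2 :=
            (T3 k).eventually (eventually_lt_nhds (by linarith))
          have hev2 : ∀ᶠ N : ℕ in atTop, (1:ℝ) / N < (γ - 2 * gaussQ (t k)) / 2 :=
            tendsto_one_div_atTop_nhds_zero_nat.eventually (eventually_lt_nhds (by linarith))
          filter_upwards [hev1, hev2, eventually_ge_atTop 1] with N hN1 hN2 hN3
          have hN0 : (0:ℝ) < N := by exact_mod_cast hN3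
          have hcard : ((((Finset.range N).filter (fun i => t k < |X i ω|)).card : ℝ))
              = ∑ i ∈ Finset.range N, (if t k < |X i ω| then (1:ℝ) else 0) := by
            rw [Finset.sum_boole]
          rw [← hcard] at hN1
          rw [div_lt_iff₀ hN0] at hN1 hN2
          have h7 : γ * N < ⌊γ * N⌋₊ + 1 := Nat.lt_floor_add_one _
          have h8 : ((((Finset.range N).filter (fun i => t k < |X i ω|)).card : ℝ)) < ⌊γ * N⌋₊ := by
            nlinarith
          exact_mod_cast h8.le
        have ev2 : ∀ᶠ N : ℕ in atTop,
            b < (∑ i ∈ Finset.range N, (if t k < |X i ω| then |X i ω| else 0)) / N :=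
          (T2 k).eventually (eventually_gt_nhds hk)
        filter_upwards [ev1, ev2, eventually_ge_atTop 1] with N hN1 hN2 hN3
        have hN0 : (0:ℝ) < N := by exact_mod_cast hN3
        have hMN : ⌊γ * N⌋₊ ≤ N := floor_le_self hγ1.le N
        have hle := le_topSum hMN (fun i => abs_nonneg (X i ω))
          (Finset.filter_subset (fun i => t k < |X i ω|) (Finset.range N)) hN1
        rw [Finset.sum_filter] at hle
        calc b < (∑ i ∈ Finset.range N, (if t k < |X i ω| then |X i ω| else 0)) / N := hN2
          _ ≤ topSum N ⌊γ * N⌋₊ (fun i => |X i ω|) / N := by gcongr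
      · -- upper bound
        intro b hb
        have hU : Tendsto (fun N : ℕ => (⌊γ * N⌋₊ : ℝ) / N * a
            + (∑ i ∈ Finset.range N, max (|X i ω| - a) 0) / N) atTop
            (nhds (γ * a + (m * Real.exp (-(a ^ 2) / 2) - a * γ))) :=
          ((floor_div_tendsto hγ0.le).mul_const a).add T1
        rw [show γ * a + (m * Real.exp (-(a ^ 2) / 2) - a * γ) = m * Real.exp (-(a ^ 2) / 2)
          by ring] at hU
        filter_upwards [hU.eventually (eventually_lt_nhds hb), eventually_ge_atTop 1]
          with N hN1 hN2
        have hN0 : (0:ℝ) < N := by exact_mod_cast hN2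
        have hts := topSum_le (floor_le_self hγ1.le N) a (fun i => |X i ω|)
        calc topSum N ⌊γ * N⌋₊ (fun i => |X i ω|) / N
            ≤ ((⌊γ * N⌋₊ : ℝ) * a + ∑ i ∈ Finset.range N, max (|X i ω| - a) 0) / N := by
              gcongr
          _ = (⌊γ * N⌋₊ : ℝ) / N * a + (∑ i ∈ Finset.range N, max (|X i ω| - a) 0) / N := by
              rw [add_div]; ring
          _ < b := hN1
    have hdiv := claimA.div T0 (ne_of_gt hm0)
    rw [mul_div_cancel_left₀ _ (ne_of_gt hm0)] at hdiv
    refine Tendsto.congr' ?_ hdiv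
    filter_upwards [eventually_ge_atTop 1] with N hN
    have hN0 : ((N:ℝ)) ≠ 0 := by
      have : (0:ℝ) < N := by exact_mod_cast hN
      exact ne_of_gt this
    rcases eq_or_ne (∑ i ∈ Finset.range N, |X i ω|) 0 with hS | hS
    · simp [hS]
    · simp only [Pi.div_apply]
      field_simp
  -- conclusion
  refine ⟨1, one_pos, fun ε hε _ => ?_⟩
  have measf1 : ∀ N : ℕ, AEStronglyMeasurable
      (fun ω => (∑ i ∈ Finset.range N, |X i ω|) / (N:ℝ)) μ := fun N =>
    ((Finset.measurable_sum _ (fun i _ => (hmeas i).abs)).div_const _).aestronglyMeasurable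
  have measf2 : ∀ N : ℕ, AEStronglyMeasurable
      (fun ω => topSum N ⌊γ * N⌋₊ (fun i => |X i ω|) / (∑ i ∈ Finset.range N, |X i ω|)) μ :=
    fun N => ((measurable_topSum N ⌊γ * N⌋₊ X hmeas).div
      (Finset.measurable_sum _ (fun i _ => (hmeas i).abs))).aestronglyMeasurable
  have tim1 := tendstoInMeasure_of_tendsto_ae (g := fun _ => m) measf1 h0
  have tim2 := tendstoInMeasure_of_tendsto_ae (g := fun _ => Real.exp (-(a ^ 2) / 2)) measf2 key
  constructor
  · refine tendsto_of_tendsto_of_tendsto_of_le_of_le tendsto_const_nhds (tendstoInMeasure_iff_dist.1 tim1 ε hε)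
      (fun N => zero_le) (fun N => measure_mono ?_)
    intro ω hω
    simp only [Set.mem_setOf_eq] at hω ⊢
    rw [Real.dist_eq]
    exact hω.le
  · refine tendsto_of_tendsto_of_tendsto_of_le_of_le tendsto_const_nhds (tendstoInMeasure_iff_dist.1 tim2 ε hε)
      (fun N => zero_le) (fun N => measure_mono ?_)
    intro ω hω
    simp only [Set.mem_setOf_eq] at hω ⊢
    rw [Real.dist_eq]
    exact hω.le
end

section
/- Let α ∈ (0,1) and ε > 0, and set β = 1 − 2Q(√(−2 log(1−α))). For each k, let x be a k-sparse random vector in ℝ^n (n ≥ k) whose k nonzero entries are i.i.d. standard normal N(0,1). Then P( W(x, α‖x‖₁) < k(β + ε) ) → 1 as k → ∞. -/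
open Finset MeasureTheory ProbabilityTheory Filter Real Set
open scoped ENNReal NNReal

lemma my_pdf_eq : gaussianPDFReal 0 1 = fun x => (Real.sqrt (2*Real.pi))⁻¹ * Real.exp (-(x^2)/2) := by
  ext x
  simp [gaussianPDFReal]

lemma my_gauss_eq : gaussianReal 0 1 =
    volume.withDensity (fun x => ENNReal.ofReal (gaussianPDFReal 0 1 x)) := by
  rw [gaussianReal_of_var_ne_zero _ one_ne_zero]
  rfl

lemma my_integral_gauss (g : ℝ → ℝ) :
    ∫ a, g a ∂(gaussianReal 0 1) = ∫ a, gaussianPDFReal 0 1 a * g a := by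
  rw [my_gauss_eq]
  have : (fun x => ENNReal.ofReal (gaussianPDFReal 0 1 x))
      = fun x => ((gaussianPDFReal 0 1 x).toNNReal : ℝ≥0∞) := rfl
  rw [this, integral_withDensity_eq_integral_smul
    ((measurable_gaussianPDFReal 0 1).real_toNNReal) g]
  congr 1; ext a
  simp [NNReal.smul_def, Real.coe_toNNReal _ (gaussianPDFReal_nonneg 0 1 a)]

lemma my_integrable_gauss_iff (g : ℝ → ℝ) (hg : AEStronglyMeasurable g (gaussianReal 0 1)) :
    Integrable g (gaussianReal 0 1) ↔ Integrable (fun a => gaussianPDFReal 0 1 a * g a) volume := by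
  rw [my_gauss_eq] at hg ⊢
  have : (fun x => ENNReal.ofReal (gaussianPDFReal 0 1 x))
      = fun x => ((gaussianPDFReal 0 1 x).toNNReal : ℝ≥0∞) := rfl
  rw [this, integrable_withDensity_iff_integrable_smul
    ((measurable_gaussianPDFReal 0 1).real_toNNReal)]
  constructor <;> intro h <;> [skip; skip] <;>
  · apply h.congr
    filter_upwards with a
    simp [NNReal.smul_def, Real.coe_toNNReal _ (gaussianPDFReal_nonneg 0 1 a)]
lemma my_form (r : ℝ) : Real.exp (-(r^2)/2) = Real.exp (-(1/2) * r^2) := by ring_nf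

lemma my_hasDeriv (r : ℝ) :
    HasDerivAt (fun r : ℝ => -Real.exp (-(r^2)/2)) (r * Real.exp (-(r^2)/2)) r := by
  have h1 : HasDerivAt (fun r : ℝ => -(r^2)/2) (-r) r := by
    have := ((hasDerivAt_pow 2 r).neg).div_const 2
    exact this.congr_deriv (by simp; ring)
  have h2 := h1.exp
  exact h2.neg.congr_deriv (by ring)

lemma my_tendsto_zero :
    Tendsto (fun r : ℝ => -Real.exp (-(r^2)/2)) atTop (nhds 0) := by
  rw [show (0:ℝ) = -0 by ring]
  apply Tendsto.neg
  apply Real.tendsto_exp_atBot.comp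
  apply Tendsto.atBot_div_const (by norm_num : (0:ℝ) < 2)
  exact tendsto_neg_atBot_iff.mpr (tendsto_pow_atTop two_ne_zero)

lemma my_int_r_exp_Ioi (a : ℝ) :
    ∫ r in Ioi a, r * Real.exp (-(r^2)/2) = Real.exp (-(a^2)/2) := by
  have := integral_Ioi_of_hasDerivAt_of_tendsto' (a := a)
    (f := fun r : ℝ => -Real.exp (-(r^2)/2)) (f' := fun r => r * Real.exp (-(r^2)/2))
    (fun x _ => my_hasDeriv x) ?_ my_tendsto_zero
  · rw [this]; ring
  · apply Integrable.integrableOn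
    simp_rw [my_form]
    exact integrable_mul_exp_neg_mul_sq (by norm_num)

lemma my_int_r_exp_Ioc {t : ℝ} (ht : 0 ≤ t) :
    ∫ r in Ioc 0 t, r * Real.exp (-(r^2)/2) = 1 - Real.exp (-(t^2)/2) := by
  rw [← intervalIntegral.integral_of_le ht]
  rw [intervalIntegral.integral_eq_sub_of_hasDerivAt (fun x _ => my_hasDeriv x)]
  · norm_num [Real.exp_zero]; ring
  · apply Continuous.intervalIntegrable
    continuity

lemma my_int_exp_Ioi (t : ℝ) :
    ∫ r in Ioi t, Real.exp (-(r^2)/2) = Real.sqrt (2 * Real.pi) * gaussQ t := by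
  rw [gaussQ, ← mul_assoc, mul_inv_cancel₀ (by positivity), one_mul]

lemma my_int_min_part (t : ℝ) : Integrable (fun r : ℝ => Real.exp (-(r^2)/2) * min r t) := by
  apply Integrable.mono' (g := fun r => Real.exp (-(r^2)/2) * (|r| + |t|)) ?_ ?_ ?_
  · have i1 : Integrable (fun r : ℝ => Real.exp (-(r^2)/2) * |t|) := by
      have := (integrable_exp_neg_mul_sq (b := 1/2) (by norm_num)).mul_const |t|
      apply this.congr
      filter_upwards with r
      rw [my_form]
    have i2 : Integrable (fun r : ℝ => Real.exp (-(r^2)/2) * |r|) := by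
      have := (integrable_mul_exp_neg_mul_sq (b := 1/2) (by norm_num)).abs
      apply this.congr
      filter_upwards with r
      rw [abs_mul, abs_of_nonneg (Real.exp_pos _).le, my_form]
      ring
    exact (i2.add i1).congr (by filter_upwards with r; simp [mul_add])
  · exact (Continuous.mul (by continuity) (continuous_min.comp
      (continuous_id.prodMk continuous_const))).aestronglyMeasurable
  · filter_upwards with r
    rw [norm_mul, Real.norm_eq_abs, Real.norm_eq_abs,
      abs_of_nonneg (Real.exp_pos _).le]
    apply mul_le_mul_of_nonneg_left _ (Real.exp_pos _).le
    exact (abs_min_le_max_abs_abs (a := r) (b := t)).trans (max_le (le_add_of_nonneg_right (abs_nonneg _))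
      (le_add_of_nonneg_left (abs_nonneg _)))

lemma my_int_lin_part (c : ℝ) : Integrable (fun r : ℝ => Real.exp (-(r^2)/2) * (c * r)) := by
  have := (integrable_mul_exp_neg_mul_sq (b := 1/2) (by norm_num)).const_mul c
  apply this.congr
  filter_upwards with r
  rw [my_form]; ring

lemma my_integrable_min (α t : ℝ) :
    Integrable (fun r : ℝ => Real.exp (-(r^2)/2) * (min r t - α * r)) := by
  have := (my_int_min_part t).sub (my_int_lin_part α)
  apply this.congr
  filter_upwards with r
  simp only [Pi.sub_apply]; ring

lemma my_int_exp : Integrable (fun r : ℝ => Real.exp (-(r^2)/2)) := by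
  simp_rw [my_form]; exact integrable_exp_neg_mul_sq (by norm_num)

lemma my_int_rexp : Integrable (fun r : ℝ => r * Real.exp (-(r^2)/2)) := by
  have := integrable_mul_exp_neg_mul_sq (b := 1/2) (by norm_num)
  apply this.congr; filter_upwards with r; rw [my_form]

lemma my_mean {α t : ℝ} (ht : 0 < t) (hexp : Real.exp (-(t^2)/2) = 1 - α) :
    ∫ a, (min |a| t - α * |a|) ∂(gaussianReal 0 1) = 2 * t * gaussQ t := by
  rw [my_integral_gauss, my_pdf_eq]
  simp only [mul_assoc]
  rw [integral_const_mul]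
  have habs : (fun a : ℝ => Real.exp (-(a^2)/2) * (min |a| t - α * |a|))
      = fun a => (fun r => Real.exp (-(r^2)/2) * (min r t - α * r)) |a| := by
    funext a; simp [sq_abs]
  rw [habs, integral_comp_abs (f := fun r => Real.exp (-(r^2)/2) * (min r t - α * r))]
  have hsplit : ∫ r in Ioi (0:ℝ), Real.exp (-(r^2)/2) * (min r t - α * r)
      = (∫ r in Ioc 0 t, Real.exp (-(r^2)/2) * (min r t - α * r))
        + ∫ r in Ioi t, Real.exp (-(r^2)/2) * (min r t - α * r) := by
    rw [← Set.Ioc_union_Ioi_eq_Ioi ht.le]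
    exact setIntegral_union (Set.Ioc_disjoint_Ioi le_rfl) measurableSet_Ioi
      (my_integrable_min α t).integrableOn (my_integrable_min α t).integrableOn
  have e1 : ∫ r in Ioc (0:ℝ) t, Real.exp (-(r^2)/2) * (min r t - α * r)
      = (1-α) * (1 - Real.exp (-(t^2)/2)) := by
    rw [setIntegral_congr_fun measurableSet_Ioc
      (g := fun r => (1-α) * (r * Real.exp (-(r^2)/2))) (fun r hr => by
        rw [min_eq_left hr.2]; ring)]
    rw [integral_const_mul, my_int_r_exp_Ioc ht.le]
  have e2 : ∫ r in Ioi t, Real.exp (-(r^2)/2) * (min r t - α * r)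
      = t * (Real.sqrt (2*Real.pi) * gaussQ t) - α * Real.exp (-(t^2)/2) := by
    rw [setIntegral_congr_fun measurableSet_Ioi
      (g := fun r => t * Real.exp (-(r^2)/2) - α * (r * Real.exp (-(r^2)/2))) (fun r hr => by
        rw [min_eq_right (le_of_lt hr)]; ring)]
    rw [integral_sub ((my_int_exp.const_mul t).integrableOn)
      ((my_int_rexp.const_mul α).integrableOn), integral_const_mul, integral_const_mul,
      my_int_exp_Ioi, my_int_r_exp_Ioi]
  rw [hsplit, e1, e2, hexp]
  have hs : Real.sqrt (2*Real.pi) ≠ 0 := by positivity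
  field_simp
  ring

lemma my_memL2_abs : MemLp (fun a : ℝ => |a|) 2 (gaussianReal 0 1) := by
  rw [memLp_two_iff_integrable_sq continuous_abs.aestronglyMeasurable]
  rw [my_integrable_gauss_iff (fun x : ℝ => |x|^2) (continuous_abs.pow 2).aestronglyMeasurable]
  have i2 : Integrable (fun a : ℝ => a^2 * Real.exp (-(a^2)/2)) := by
    have := integrable_rpow_mul_exp_neg_mul_sq (b:=1/2) (by norm_num) (s := ((2:ℕ):ℝ))
      (by norm_num)
    apply this.congr; filter_upwards with a; rw [Real.rpow_natCast, my_form]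
  have := i2.const_mul (Real.sqrt (2*Real.pi))⁻¹
  apply this.congr
  filter_upwards with a
  rw [my_pdf_eq, sq_abs]; ring

lemma my_memL2 (α t : ℝ) : MemLp (fun a => min |a| t - α * |a|) 2 (gaussianReal 0 1) := by
  have hfc : Continuous fun a : ℝ => min |a| t - α * |a| := by continuity
  have hg : MemLp (fun a : ℝ => (1+|α|) * |a| + |t|) 2 (gaussianReal 0 1) :=
    (my_memL2_abs.const_mul _).add (memLp_const _)
  apply MemLp.of_le hg hfc.aestronglyMeasurable
  filter_upwards with a
  rw [Real.norm_eq_abs, Real.norm_eq_abs]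
  have h1 : |min |a| t| ≤ |a| + |t| := by
    refine (abs_min_le_max_abs_abs (a := |a|) (b := t)).trans (max_le ?_ ?_)
    · rw [abs_abs]; exact le_add_of_nonneg_right (abs_nonneg _)
    · exact le_add_of_nonneg_left (abs_nonneg _)
  have h2 : abs (min (abs a) t - α * abs a) ≤ abs (min (abs a) t) + |α| * abs a := by
    refine (abs_sub _ _).trans ?_
    rw [abs_mul, abs_abs]
  have h3 : (0:ℝ) ≤ (1+|α|) * |a| + |t| := by positivity
  rw [abs_of_nonneg h3]
  nlinarith [abs_nonneg a, abs_nonneg t, abs_nonneg α]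

lemma my_variance_map {Ω : Type*} [MeasurableSpace Ω] (μ : Measure Ω) {X : Ω → ℝ} {g : ℝ → ℝ}
    (hg : Measurable g) (hX : Measurable X) :
    variance (fun ω => g (X ω)) μ = variance g (Measure.map X μ) := by
  unfold variance evariance
  rw [integral_map hX.aemeasurable hg.aestronglyMeasurable]
  rw [lintegral_map ?_ hX]
  exact ((hg.sub measurable_const).nnnorm.coe_nnreal_ennreal.pow_const 2)

lemma my_det {n : ℕ} (k : ℕ) (α t β ε : ℝ) (hα0 : 0 < α) (ht : 0 ≤ t)
    (y : Fin n → ℝ) (K : Finset (Fin n)) (hK : K.card = k)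
    (hz : ∀ i ∉ K, y i = 0)
    (hW : (k:ℝ) * (β + ε) ≤ W y (α * ∑ i, |y i|)) :
    ∑ i ∈ K, (min |y i| t - α * |y i|) ≤ (k:ℝ) * ((1-β)*t) - k*ε*t := by
  classical
  have hspt : spt y ⊆ K := by
    intro i hi
    simp only [spt, mem_filter] at hi
    by_contra hiK
    exact hi.2 (hz i hiK)
  have hsum : ∑ i, |y i| = ∑ i ∈ K, |y i| :=
    (Finset.sum_subset (Finset.subset_univ K) (fun i _ hi => by rw [hz i hi, abs_zero])).symm
  set lam := α * ∑ i, |y i| with hlamdef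
  have hlam : 0 ≤ lam := mul_nonneg hα0.le (Finset.sum_nonneg (fun i _ => abs_nonneg _))
  set 𝒮 := (spt y).powerset.filter (fun S => ∑ i ∈ S, |y i| ≤ lam) with h𝒮
  have hne : 𝒮.Nonempty := ⟨∅, by simp [h𝒮, hlam]⟩
  obtain ⟨S, hS, hWS⟩ := Finset.exists_mem_eq_sup 𝒮 hne Finset.card
  simp only [h𝒮, mem_filter, Finset.mem_powerset] at hS
  obtain ⟨hSsub, hSsum⟩ := hS
  have hSsubK : S ⊆ K := hSsub.trans hspt
  have hWdef : (W y lam : ℝ) = S.card := by rw [W, ← h𝒮, hWS]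
  have hcard : (k:ℝ) * (β + ε) ≤ S.card := by rw [← hWdef]; exact hW
  have hSk : S.card ≤ k := hK ▸ Finset.card_le_card hSsubK
  have hcardKS : ((K \ S).card : ℝ) = (k:ℝ) - S.card := by
    rw [Finset.card_sdiff_of_subset hSsubK, Nat.cast_sub (hK ▸ Finset.card_le_card hSsubK), hK]
  have b1 : ∑ i ∈ S, min |y i| t ≤ lam := by
    refine le_trans (Finset.sum_le_sum (fun i _ => min_le_left _ _)) hSsum
  have b2 : ∑ i ∈ K \ S, min |y i| t ≤ ((K \ S).card : ℝ) * t := by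
    refine le_trans (Finset.sum_le_sum (fun i _ => min_le_right _ _)) ?_
    rw [Finset.sum_const, nsmul_eq_mul]
  have key : ∑ i ∈ K, min |y i| t ≤ lam + ((k:ℝ) - S.card) * t := by
    rw [← Finset.sum_sdiff hSsubK]
    rw [hcardKS] at b2
    linarith
  have hmul : ((k:ℝ) - S.card) * t ≤ ((k:ℝ) - k * (β + ε)) * t :=
    mul_le_mul_of_nonneg_right (by linarith) ht
  have expand : ∑ i ∈ K, (min |y i| t - α * |y i|)
      = (∑ i ∈ K, min |y i| t) - lam := by
    rw [Finset.sum_sub_distrib, ← Finset.mul_sum, hlamdef, hsum]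
  rw [expand]
  nlinarith

/-- For random `k`-sparse Gaussian vectors, with `β = 1 − 2Q(√(−2 log(1−α)))`, the probability
that `W(x, α‖x‖₁) < k(β + ε)` tends to `1` as `k → ∞`. -/
theorem stmt7 (α ε : ℝ) (hα : α ∈ Set.Ioo (0 : ℝ) 1) (hε : 0 < ε)
    (n : ℕ → ℕ) (hn : ∀ k, k ≤ n k)
    (Ω : ℕ → Type*) [∀ k, MeasurableSpace (Ω k)]
    (μ : ∀ k, Measure (Ω k)) [∀ k, IsProbabilityMeasure (μ k)]
    (x : ∀ k, Ω k → Fin (n k) → ℝ)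
    (K : ∀ k, Finset (Fin (n k))) (hKcard : ∀ k, (K k).card = k)
    (hzero : ∀ k, ∀ ω, ∀ i ∉ K k, x k ω i = 0)
    (hnonzero : ∀ k, ∀ ω, ∀ i ∈ K k, x k ω i ≠ 0)
    (hmeas : ∀ k i, Measurable (fun ω => x k ω i))
    (hindep : ∀ k, iIndepFun
      (fun (i : {i // i ∈ K k}) => fun ω => x k ω i.1) (μ k))
    (hdist : ∀ k, ∀ i ∈ K k, Measure.map (fun ω => x k ω i) (μ k) = gaussianReal 0 1) :
    Tendsto
      (fun k => μ k {ω | (W (x k ω) (α * ∑ i, |x k ω i|) : ℝ) <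
          k * ((1 - 2 * gaussQ (Real.sqrt (-2 * Real.log (1 - α)))) + ε)})
      atTop (nhds 1) := by
  classical
  obtain ⟨hα0, hα1⟩ := hα
  set t : ℝ := Real.sqrt (-2 * Real.log (1-α)) with htdef
  have hlog : Real.log (1-α) < 0 := Real.log_neg (by linarith) (by linarith)
  have ht : 0 < t := Real.sqrt_pos.mpr (by linarith)
  have htsq : t^2 = -2 * Real.log (1-α) := Real.sq_sqrt (by linarith)
  have hexp : Real.exp (-(t^2)/2) = 1 - α := by
    rw [htsq, show -(-2 * Real.log (1-α))/2 = Real.log (1-α) by ring,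
      Real.exp_log (by linarith)]
  set β : ℝ := 1 - 2 * gaussQ t with hβ
  set f : ℝ → ℝ := fun a => min |a| t - α * |a| with hfdef
  have hfc : Continuous f := by
    apply Continuous.sub
    · exact continuous_abs.min continuous_const
    · exact continuous_const.mul continuous_abs
  have hfm : Measurable f := hfc.measurable
  have hmean : ∫ a, f a ∂(gaussianReal 0 1) = (1 - β) * t := by
    rw [hfdef, my_mean ht hexp, hβ]; ring
  set σ2 : ℝ := variance f (gaussianReal 0 1) with hσ2
  have hfL2γ : MemLp f 2 (gaussianReal 0 1) := my_memL2 α t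
  -- per-k random variables
  set X : ∀ k, Fin (n k) → Ω k → ℝ := fun k i ω => f (x k ω i) with hX
  have hXiL2 : ∀ k, ∀ i ∈ K k, MemLp (X k i) 2 (μ k) := by
    intro k i hi
    have h1 : MemLp f 2 (Measure.map (fun ω => x k ω i) (μ k)) := by
      rw [hdist k i hi]; exact hfL2γ
    have hsm : AEStronglyMeasurable f (Measure.map (fun ω => x k ω i) (μ k)) := by
      rw [hdist k i hi]; exact hfc.aestronglyMeasurable
    exact (memLp_map_measure_iff hsm (hmeas k i).aemeasurable).mp h1
  have hEXi : ∀ k, ∀ i ∈ K k, ∫ ω, X k i ω ∂(μ k) = (1-β)*t := by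
    intro k i hi
    have hmap := hdist k i hi
    have hsm : AEStronglyMeasurable f (Measure.map (fun ω => x k ω i) (μ k)) := by
      rw [hmap]; exact hfc.aestronglyMeasurable
    have h1 := integral_map (μ := μ k) (φ := fun ω => x k ω i)
      (hmeas k i).aemeasurable hsm
    rw [show (∫ ω, X k i ω ∂(μ k)) = ∫ ω, f (x k ω i) ∂(μ k) from rfl, ← h1, hmap, hmean]
  have hVarXi : ∀ k, ∀ i ∈ K k, variance (X k i) (μ k) = σ2 := by
    intro k i hi
    rw [hX]
    rw [my_variance_map (μ k) hfm (hmeas k i), hdist k i hi]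
  set S : ∀ k, Ω k → ℝ := fun k => ∑ i ∈ K k, X k i with hS
  have hSL2 : ∀ k, MemLp (S k) 2 (μ k) := fun k => memLp_finset_sum' _ (hXiL2 k)
  have hES : ∀ k, ∫ ω, S k ω ∂(μ k) = k * ((1-β)*t) := by
    intro k
    have h1 : ∫ ω, S k ω ∂(μ k) = ∑ i ∈ K k, ∫ ω, X k i ω ∂(μ k) := by
      rw [hS]
      simp only [Finset.sum_apply]
      exact integral_finset_sum _ (fun i hi => ((hXiL2 k i hi).integrable one_le_two))
    rw [h1, Finset.sum_congr rfl (hEXi k), Finset.sum_const, hKcard, nsmul_eq_mul]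
  have hVarS : ∀ k, variance (S k) (μ k) = k * σ2 := by
    intro k
    rw [hS, IndepFun.variance_sum (hXiL2 k) ?_]
    · rw [Finset.sum_congr rfl (hVarXi k), Finset.sum_const, hKcard, nsmul_eq_mul]
    · intro i hi j hj hij
      have h := (hindep k).indepFun (i := ⟨i, hi⟩) (j := ⟨j, hj⟩)
        (fun h => hij (congrArg Subtype.val h))
      exact h.comp hfm hfm
  -- Chebyshev bad sets
  set B : ∀ k, Set (Ω k) := fun k =>
    {ω | (k:ℝ)*ε*t ≤ |S k ω - ∫ ω', S k ω' ∂(μ k)|} with hB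
  have hcheb : ∀ k, 1 ≤ k → μ k (B k)
      ≤ ENNReal.ofReal ((σ2/(ε*t)^2) * (1/(k:ℝ))) := by
    intro k hk
    have hkpos : (0:ℝ) < k := by exact_mod_cast hk
    have hc : (0:ℝ) < (k:ℝ)*ε*t := by positivity
    have := meas_ge_le_variance_div_sq (hSL2 k) hc
    refine le_trans ?_ (le_trans this ?_)
    · apply le_of_eq
      congr 1
    · apply ENNReal.ofReal_le_ofReal
      apply le_of_eq
      rw [hVarS k]
      field_simp
  -- inclusion of complement of the event in the bad set
  have hincl : ∀ k, {ω | (W (x k ω) (α * ∑ i, |x k ω i|) : ℝ) < k * (β + ε)}ᶜ ⊆ B k := by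
    intro k ω hω
    simp only [Set.mem_compl_iff, Set.mem_setOf_eq, not_lt] at hω
    have hdet := my_det k α t β ε hα0 ht.le (x k ω) (K k) (hKcard k)
      (hzero k ω) hω
    have hSω : S k ω = ∑ i ∈ K k, f (x k ω i) := by
      rw [hS]; simp only [Finset.sum_apply]; rfl
    have hle : S k ω - ∫ ω', S k ω' ∂(μ k) ≤ -((k:ℝ)*ε*t) := by
      rw [hSω, hES k]
      have : ∑ i ∈ K k, f (x k ω i) ≤ (k:ℝ) * ((1-β)*t) - k*ε*t := hdet
      linarith
    simp only [hB, Set.mem_setOf_eq]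
    exact le_abs.mpr (Or.inr (by linarith))
  -- the bad set measure tends to zero
  have hBtend : Tendsto (fun k => μ k (B k)) atTop (nhds 0) := by
    refine tendsto_of_tendsto_of_tendsto_of_le_of_le' (g := fun _ : ℕ => (0:ℝ≥0∞))
      (h := fun k : ℕ => ENNReal.ofReal ((σ2/(ε*t)^2) * (1/(k:ℝ))))
      tendsto_const_nhds ?_ (Eventually.of_forall (fun k => zero_le)) ?_
    · have hreal : Tendsto (fun k : ℕ => (σ2/(ε*t)^2) * (1/(k:ℝ))) atTop (nhds 0) := by
        rw [show (0:ℝ) = (σ2/(ε*t)^2) * 0 by ring]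
        exact tendsto_const_nhds.mul tendsto_one_div_atTop_nhds_zero_nat
      have := ENNReal.tendsto_ofReal hreal
      simpa using this
    · filter_upwards [eventually_ge_atTop 1] with k hk
      exact hcheb k hk
  -- conclusion
  have hupper : ∀ k, μ k {ω | (W (x k ω) (α * ∑ i, |x k ω i|) : ℝ) < k * (β + ε)} ≤ 1 :=
    fun k => prob_le_one
  have hlower : ∀ k, 1 - μ k (B k)
      ≤ μ k {ω | (W (x k ω) (α * ∑ i, |x k ω i|) : ℝ) < k * (β + ε)} := by
    intro k
    set E := {ω | (W (x k ω) (α * ∑ i, |x k ω i|) : ℝ) < k * (β + ε)}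
    have h1 : (1:ℝ≥0∞) ≤ μ k E + μ k (B k) := by
      have h2 : (1:ℝ≥0∞) ≤ μ k E + μ k Eᶜ := by
        have := measure_union_le (μ := μ k) E Eᶜ
        rwa [Set.union_compl_self, measure_univ] at this
      exact h2.trans (add_le_add_right (measure_mono (hincl k)) _)
    exact tsub_le_iff_right.mpr h1
  have hltend : Tendsto (fun k => 1 - μ k (B k)) atTop (nhds 1) := by
    have := ENNReal.Tendsto.sub
      (tendsto_const_nhds : Tendsto (fun _ : ℕ => (1:ℝ≥0∞)) atTop (nhds 1)) hBtend
      (Or.inl ENNReal.one_ne_top)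
    simpa using this
  exact tendsto_of_tendsto_of_tendsto_of_le_of_le hltend tendsto_const_nhds hlower hupper
end

section
/- Let α ∈ (0,1) and ε > 0. For each k, let x be a k-sparse random vector in ℝ^n (n ≥ k) whose k nonzero entries are i.i.d. standard normal N(0,1), with support set K. Then, as k → ∞, the probability of the following event tends to 1: for every vector x̂ ∈ ℝ^n with ‖x − x̂‖₁ ≤ α ‖x‖₁ and every k-support L of x̂, one has |K ∩ L| / k > 2Q(√(−2 log(1−α))) − ε. -/
open Finset MeasureTheory ProbabilityTheory Filter

open scoped NNReal ENNReal

noncomputable def gpdf (y : ℝ) : ℝ := (Real.sqrt (2 * Real.pi))⁻¹ * Real.exp (-(y ^ 2) / 2)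

lemma gpdf_eq (y : ℝ) : gaussianPDFReal 0 1 y = gpdf y := by
  simp [ProbabilityTheory.gaussianPDFReal, gpdf]

lemma gpdf_nonneg (y : ℝ) : 0 ≤ gpdf y := by
  unfold gpdf; positivity

lemma gpdf_abs (y : ℝ) : gpdf |y| = gpdf y := by
  simp [gpdf, sq_abs]

lemma gpdf_cont : Continuous gpdf := by
  unfold gpdf; continuity

lemma gauss_eq_withDensity :
    gaussianReal 0 1 = volume.withDensity (fun y => ((gpdf y).toNNReal : ℝ≥0∞)) := by
  rw [gaussianReal_of_var_ne_zero _ one_ne_zero]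
  congr 1
  funext y
  rw [show gaussianPDF 0 1 y = ENNReal.ofReal (gaussianPDFReal 0 1 y) from rfl, gpdf_eq]
  rfl

lemma integral_gauss (g : ℝ → ℝ) :
    ∫ y, g y ∂(gaussianReal 0 1) = ∫ y, gpdf y * g y := by
  rw [gauss_eq_withDensity,
    integral_withDensity_eq_integral_smul (gpdf_cont.measurable.real_toNNReal) g]
  congr 1
  funext y
  simp [NNReal.smul_def, Real.coe_toNNReal _ (gpdf_nonneg y)]

lemma integrable_gauss_iff (g : ℝ → ℝ) :
    Integrable g (gaussianReal 0 1) ↔ Integrable (fun y => gpdf y * g y) := by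
  rw [gauss_eq_withDensity,
    integrable_withDensity_iff_integrable_smul (gpdf_cont.measurable.real_toNNReal)]
  constructor <;> intro h <;> refine h.congr (Filter.Eventually.of_forall fun y => ?_) <;>
    simp [NNReal.smul_def, Real.coe_toNNReal _ (gpdf_nonneg y)]

lemma intexp : Integrable (fun y : ℝ => Real.exp (-(y ^ 2) / 2)) := by
  have := integrable_exp_neg_mul_sq (b := (1/2 : ℝ)) (by norm_num)
  refine this.congr (Filter.Eventually.of_forall fun y => ?_)
  ring_nf

lemma intyexp : Integrable (fun y : ℝ => y * Real.exp (-(y ^ 2) / 2)) := by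
  have := integrable_mul_exp_neg_mul_sq (b := (1/2 : ℝ)) (by norm_num)
  refine this.congr (Filter.Eventually.of_forall fun y => ?_)
  ring_nf

lemma inty2exp : Integrable (fun y : ℝ => y ^ 2 * Real.exp (-(y ^ 2) / 2)) := by
  have := integrable_rpow_mul_exp_neg_mul_sq (b := (1/2 : ℝ)) (by norm_num) (s := 2) (by norm_num)
  refine this.congr (Filter.Eventually.of_forall fun y => ?_)
  show y ^ (2:ℝ) * _ = _
  rw [show (2:ℝ) = ((2:ℕ):ℝ) by norm_num, Real.rpow_natCast]
  ring_nf

lemma integrable_gpdf_mul {g : ℝ → ℝ} (hg : Continuous g) (hdom : ∀ y, |g y| ≤ y ^ 2 + 1) :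
    Integrable (fun y => gpdf y * g y) := by
  refine Integrable.mono' (((inty2exp.add intexp).const_mul
    ((Real.sqrt (2 * Real.pi))⁻¹))) (gpdf_cont.mul hg).aestronglyMeasurable
    (Filter.Eventually.of_forall fun y => ?_)
  have h1 : ‖gpdf y * g y‖ = gpdf y * |g y| := by
    rw [norm_mul, Real.norm_eq_abs, Real.norm_eq_abs, abs_of_nonneg (gpdf_nonneg y)]
  rw [h1]
  have h2 : gpdf y * |g y| ≤ gpdf y * (y ^ 2 + 1) :=
    mul_le_mul_of_nonneg_left (hdom y) (gpdf_nonneg y)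
  refine h2.trans (le_of_eq ?_)
  simp only [Pi.add_apply]
  unfold gpdf
  ring

lemma ioi_yexp (a : ℝ) :
    ∫ y in Set.Ioi a, y * Real.exp (-(y ^ 2) / 2) = Real.exp (-(a ^ 2) / 2) := by
  have hderiv : ∀ y ∈ Set.Ici a,
      HasDerivAt (fun z : ℝ => -Real.exp (-(z ^ 2) / 2)) (y * Real.exp (-(y ^ 2) / 2)) y := by
    intro y _
    have h1 : HasDerivAt (fun z : ℝ => -(z ^ 2) / 2) (-y) y := by
      have h0 : HasDerivAt (fun z : ℝ => z ^ 2) (2 * y ^ 1) y := hasDerivAt_pow 2 y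
      have := (h0.neg).div_const 2
      exact this.congr_deriv (by ring)
    have h2 := h1.exp
    have h3 := h2.neg
    exact h3.congr_deriv (by ring)
  have htend : Tendsto (fun z : ℝ => -Real.exp (-(z ^ 2) / 2)) atTop (nhds 0) := by
    have t0 : Tendsto (fun z : ℝ => z ^ 2) atTop atTop := tendsto_pow_atTop two_ne_zero
    have t1 : Tendsto (fun z : ℝ => -(z ^ 2) / 2) atTop atBot := by
      have := t0.atTop_mul_const_of_neg (r := -(1/2 : ℝ)) (by norm_num)
      refine this.congr fun z => by ring
    have t2 := (Real.tendsto_exp_atBot.comp t1).neg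
    simpa using t2
  have := integral_Ioi_of_hasDerivAt_of_tendsto' hderiv (intyexp.integrableOn) htend
  rw [this]
  simp

lemma m_val : ∫ y, |y| ∂(gaussianReal 0 1) = 2 * (Real.sqrt (2 * Real.pi))⁻¹ := by
  rw [integral_gauss]
  have h1 : (fun y : ℝ => gpdf y * |y|) = fun y => (fun u => gpdf u * u) |y| := by
    funext y; simp only [gpdf_abs]
  rw [h1, integral_comp_abs (f := fun u => gpdf u * u)]
  have h2 : ∀ u : ℝ, gpdf u * u = (Real.sqrt (2 * Real.pi))⁻¹ * (u * Real.exp (-(u ^ 2) / 2)) := by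
    intro u; unfold gpdf; ring
  rw [setIntegral_congr_fun measurableSet_Ioi (fun u _ => h2 u), integral_const_mul, ioi_yexp 0]
  norm_num

lemma c_val (t : ℝ) (ht : 0 ≤ t) :
    ∫ y, max (|y| - t) 0 ∂(gaussianReal 0 1) =
      2 * ((Real.sqrt (2 * Real.pi))⁻¹ * Real.exp (-(t ^ 2) / 2)) - t * (2 * gaussQ t) := by
  rw [integral_gauss]
  have h1 : (fun y : ℝ => gpdf y * max (|y| - t) 0)
      = fun y => (fun u => gpdf u * max (u - t) 0) |y| := by
    funext y; simp only [gpdf_abs]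
  rw [h1, integral_comp_abs (f := fun u => gpdf u * max (u - t) 0)]
  have hint : Integrable (fun u : ℝ => gpdf u * max (u - t) 0) := by
    refine integrable_gpdf_mul (by continuity) fun y => ?_
    have h3 : |max (y - t) 0| ≤ |y| := by
      rw [abs_of_nonneg (le_max_right _ _)]
      rcases le_total (y - t) 0 with h | h
      · simpa [max_eq_right h] using abs_nonneg y
      · rw [max_eq_left h]; cases abs_cases y <;> nlinarith
    refine h3.trans ?_
    nlinarith [abs_nonneg y, sq_abs y, sq_nonneg (|y| - 1)]
  have hsplit : Set.Ioc 0 t ∪ Set.Ioi t = Set.Ioi (0 : ℝ) := Set.Ioc_union_Ioi_eq_Ioi ht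
  rw [← hsplit, setIntegral_union (Set.Ioc_disjoint_Ioi le_rfl) measurableSet_Ioi
    hint.integrableOn hint.integrableOn]
  have hzero : ∫ u in Set.Ioc 0 t, gpdf u * max (u - t) 0 = 0 := by
    rw [setIntegral_congr_fun measurableSet_Ioc
      (g := fun _ => (0 : ℝ)) (fun u hu => by
        simp [max_eq_right (by linarith [hu.2] : u - t ≤ 0)])]
    simp
  rw [hzero, zero_add]
  have heq : ∀ u ∈ Set.Ioi t, gpdf u * max (u - t) 0 =
      (Real.sqrt (2 * Real.pi))⁻¹ * (u * Real.exp (-(u ^ 2) / 2))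
        - t * (Real.sqrt (2 * Real.pi))⁻¹ * Real.exp (-(u ^ 2) / 2) := by
    intro u hu
    have : max (u - t) 0 = u - t := max_eq_left (by linarith [Set.mem_Ioi.mp hu])
    rw [this]; unfold gpdf; ring
  rw [setIntegral_congr_fun measurableSet_Ioi heq, integral_sub
    ((intyexp.const_mul _).integrableOn) ((intexp.const_mul _).integrableOn),
    integral_const_mul, integral_const_mul, ioi_yexp t]
  unfold gaussQ
  ring

lemma det_lemma {N k : ℕ} (α t : ℝ) (ht : 0 ≤ t)
    (x xhat : Fin N → ℝ) (K L : Finset (Fin N)) (hK : K.card = k) (hL : L.card = k)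
    (hz : ∀ i ∉ K, x i = 0)
    (hsup : ∀ i ∈ L, ∀ j ∉ L, |xhat j| ≤ |xhat i|)
    (hle : (∑ i, |x i - xhat i|) ≤ α * ∑ i, |x i|) :
    (1 - α) * (∑ i ∈ K, |x i|) ≤
      (∑ i ∈ K, max (|x i| - t) 0) + (K ∩ L).card * t := by
  classical
  have S1 : ∑ i, |x i| = ∑ i ∈ K, |x i| :=
    (Finset.sum_subset (Finset.subset_univ K) (fun i _ hi => by rw [hz i hi]; simp)).symm
  set A := K \ L with hA
  set B := L \ K with hB
  have hcardA := Finset.card_sdiff_add_card_inter K L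
  have hcardB := Finset.card_sdiff_add_card_inter L K
  have hcard : A.card = B.card := by
    show (K \ L).card = (L \ K).card
    rw [Finset.inter_comm] at hcardB
    rw [hK] at hcardA
    rw [hL] at hcardB
    omega
  -- ∑ over A of |xhat| ≤ ∑ over B of |xhat|
  have h2 : ∑ i ∈ A, |xhat i| ≤ ∑ i ∈ B, |xhat i| := by
    let e := Finset.equivOfCardEq hcard
    rw [← Finset.sum_attach A (fun i => |xhat i|), ← Finset.sum_attach B (fun i => |xhat i|),
      ← Finset.univ_eq_attach, ← Finset.univ_eq_attach, ← Equiv.sum_comp e (fun b => |xhat b.1|)]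
    refine Finset.sum_le_sum fun a _ => ?_
    exact hsup _ (Finset.mem_sdiff.mp (e a).2).1 _ (Finset.mem_sdiff.mp a.2).2
  have hdisj : Disjoint A B := disjoint_sdiff_sdiff
  have h3 : ∑ i ∈ A, |x i| - ∑ i ∈ A, |xhat i| + ∑ i ∈ B, |xhat i| ≤ α * ∑ i ∈ K, |x i| := by
    have c1 : ∑ i ∈ A ∪ B, |x i - xhat i| ≤ ∑ i, |x i - xhat i| :=
      Finset.sum_le_sum_of_subset_of_nonneg (Finset.subset_univ _)
        (fun i _ _ => abs_nonneg _)
    rw [Finset.sum_union hdisj] at c1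
    have c2 : ∑ i ∈ A, (|x i| - |xhat i|) ≤ ∑ i ∈ A, |x i - xhat i| :=
      Finset.sum_le_sum fun i _ => abs_sub_abs_le_abs_sub _ _
    rw [Finset.sum_sub_distrib] at c2
    have c3 : ∑ i ∈ B, |x i - xhat i| = ∑ i ∈ B, |xhat i| := by
      refine Finset.sum_congr rfl fun i hi => ?_
      rw [hz i (Finset.mem_sdiff.mp hi).2]
      simp
    rw [c3] at c1
    rw [S1] at hle
    linarith
  have hAx : ∑ i ∈ A, |x i| ≤ α * ∑ i ∈ K, |x i| := by linarith
  have h4 : ∑ i ∈ K ∩ L, |x i| ≤ ∑ i ∈ K ∩ L, max (|x i| - t) 0 + (K ∩ L).card * t := by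
    have := Finset.sum_le_sum (s := K ∩ L)
      (f := fun i => |x i|) (g := fun i => max (|x i| - t) 0 + t)
      (fun i _ => by
        show |x i| ≤ max (|x i| - t) 0 + t
        linarith [le_max_left (|x i| - t) 0])
    rw [Finset.sum_add_distrib, Finset.sum_const, nsmul_eq_mul] at this
    exact this
  have h5 : ∑ i ∈ K ∩ L, |x i| + ∑ i ∈ A, |x i| = ∑ i ∈ K, |x i| :=
    Finset.sum_inter_add_sum_sdiff K L _
  have h6 : ∑ i ∈ K ∩ L, max (|x i| - t) 0 ≤ ∑ i ∈ K, max (|x i| - t) 0 :=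
    Finset.sum_le_sum_of_subset_of_nonneg Finset.inter_subset_left
      (fun i _ _ => le_max_right _ _)
  linarith

lemma integrable_sq_gauss {f : ℝ → ℝ} (hf : Continuous f) (hdom : ∀ y, |f y| ≤ |y|) :
    Integrable (fun y => f y ^ 2) (gaussianReal 0 1) := by
  rw [integrable_gauss_iff]
  refine integrable_gpdf_mul (hf.pow 2) fun y => ?_
  have h1 : |f y ^ 2| = |f y| ^ 2 := abs_pow (f y) 2
  rw [h1]
  have := hdom y
  nlinarith [abs_nonneg (f y), abs_nonneg y, sq_abs y]

lemma memLp_two_gauss {f : ℝ → ℝ} (hf : Continuous f) (hdom : ∀ y, |f y| ≤ |y|) :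
    MemLp f 2 (gaussianReal 0 1) := by
  rw [memLp_two_iff_integrable_sq hf.aestronglyMeasurable]
  exact (integrable_sq_gauss hf hdom).congr (Filter.Eventually.of_forall fun y => rfl)

lemma cheb {k : ℕ} {Om : Type*} [MeasurableSpace Om] (μ : Measure Om) [IsProbabilityMeasure μ]
    {N : ℕ} (x : Om → Fin N → ℝ) (K : Finset (Fin N)) (hKcard : K.card = k)
    (hmeas : ∀ i, Measurable fun ω => x ω i)
    (hindep : iIndepFun (fun i : {i // i ∈ K} => fun ω => x ω i.1) μ)
    (hdist : ∀ i ∈ K, Measure.map (fun ω => x ω i) μ = gaussianReal 0 1)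
    (f : ℝ → ℝ) (hf : Continuous f) (hdom : ∀ y, |f y| ≤ |y|) {δ : ℝ} (hδ : 0 < δ)
    (hk : 0 < k) :
    μ {ω | (k : ℝ) * δ ≤ |(∑ i ∈ K, f (x ω i)) - k * ∫ y, f y ∂(gaussianReal 0 1)|}
      ≤ ENNReal.ofReal ((∫ y, y ^ 2 ∂(gaussianReal 0 1)) / (k * δ ^ 2)) := by
  classical
  set γ := gaussianReal 0 1 with hγ
  have hfL2γ : MemLp f 2 γ := memLp_two_gauss hf hdom
  set X : {i // i ∈ K} → Om → ℝ := fun i ω => f (x ω i.1) with hX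
  have hXmeas : ∀ i, Measurable (X i) := fun i => hf.measurable.comp (hmeas i.1)
  have hXL2 : ∀ i, MemLp (X i) 2 μ := by
    intro i
    have h := hfL2γ
    rw [← hdist i.1 i.2] at h
    exact (memLp_map_measure_iff hf.aestronglyMeasurable (hmeas i.1).aemeasurable).mp h
  have hmean : ∀ i, μ[X i] = ∫ y, f y ∂γ := by
    intro i
    rw [← hdist i.1 i.2, integral_map (hmeas i.1).aemeasurable hf.aestronglyMeasurable]
  have hid2 : Integrable (fun y : ℝ => y ^ 2) γ :=
    integrable_sq_gauss continuous_id (fun y => le_rfl)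
  have hvar : ∀ i, variance (X i) μ ≤ ∫ y, y ^ 2 ∂γ := by
    intro i
    refine (variance_le_expectation_sq (hXmeas i).aestronglyMeasurable).trans ?_
    have h1 : μ[(X i) ^ 2] = ∫ y, f y ^ 2 ∂γ := by
      rw [← hdist i.1 i.2,
        integral_map (f := fun y => f y ^ 2) (hmeas i.1).aemeasurable ((hf.pow 2).aestronglyMeasurable)]
      rfl
    rw [h1]
    refine integral_mono (integrable_sq_gauss hf hdom) hid2 fun y => ?_
    have := hdom y
    nlinarith [abs_nonneg (f y), abs_nonneg y, sq_abs y, sq_abs (f y)]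
  have hcomp : iIndepFun X μ := by
    have := hindep.comp (fun _ => f) (fun _ => hf.measurable)
    exact this
  have hsum : (fun ω => ∑ i ∈ K, f (x ω i)) = ∑ i : {i // i ∈ K}, X i := by
    funext ω
    rw [Finset.sum_apply]
    rw [Finset.univ_eq_attach]
    exact (Finset.sum_attach K (fun i => f (x ω i))).symm
  have hSL2 : MemLp (∑ i : {i // i ∈ K}, X i) 2 μ :=
    memLp_finset_sum' _ (fun i _ => hXL2 i)
  have hES : μ[∑ i : {i // i ∈ K}, X i] = k * ∫ y, f y ∂γ := by
    have h1 : μ[∑ i : {i // i ∈ K}, X i] = ∑ i : {i // i ∈ K}, μ[X i] := by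
      have := integral_finset_sum (μ := μ) Finset.univ
        (f := X) (fun i _ => (hXL2 i).integrable one_le_two)
      rw [← this]
      congr 1
      funext ω
      rw [Finset.sum_apply]
    rw [h1]
    simp_rw [hmean]
    rw [Finset.sum_const, Finset.card_univ, Fintype.card_coe, hKcard, nsmul_eq_mul]
  have hvarsum : variance (∑ i : {i // i ∈ K}, X i) μ ≤ k * ∫ y, y ^ 2 ∂γ := by
    rw [IndepFun.variance_sum (fun i _ => hXL2 i)
      (fun i _ j _ hij => hcomp.indepFun hij)]
    calc ∑ i : {i // i ∈ K}, variance (X i) μ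
        ≤ ∑ _i : {i // i ∈ K}, ∫ y, y ^ 2 ∂γ := Finset.sum_le_sum fun i _ => hvar i
      _ = k * ∫ y, y ^ 2 ∂γ := by
          rw [Finset.sum_const, Finset.card_univ, Fintype.card_coe, hKcard, nsmul_eq_mul]
  have hkδ : 0 < (k : ℝ) * δ := by positivity
  have hcheb := meas_ge_le_variance_div_sq (μ := μ) hSL2 hkδ
  have hset : {ω | (k : ℝ) * δ ≤ |(∑ i ∈ K, f (x ω i)) - k * ∫ y, f y ∂γ|}
      = {ω | (k : ℝ) * δ ≤ |(∑ i : {i // i ∈ K}, X i) ω - μ[∑ i : {i // i ∈ K}, X i]|} := by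
    ext ω
    simp only [Set.mem_setOf_eq, hES]
    rw [← hsum]
  rw [hset]
  refine hcheb.trans (ENNReal.ofReal_le_ofReal ?_)
  rw [div_le_div_iff₀ (by positivity) (by positivity)]
  calc variance (∑ i : {i // i ∈ K}, X i) μ * ((k : ℝ) * δ ^ 2)
      ≤ ((k : ℝ) * ∫ y, y ^ 2 ∂γ) * ((k : ℝ) * δ ^ 2) := by
        refine mul_le_mul_of_nonneg_right hvarsum (by positivity)
    _ = (∫ y, y ^ 2 ∂γ) * ((k : ℝ) * δ) ^ 2 := by ring
    _ ≤ (∫ y, y ^ 2 ∂γ) * ((k : ℝ) * δ) ^ 2 := le_rfl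

set_option maxHeartbeats 1000000 in
/-- Approximate support recovery for random `k`-sparse Gaussian vectors: with probability
tending to `1` as `k → ∞`, every `x̂` with `‖x − x̂‖₁ ≤ α‖x‖₁` and every `k`-support `L` of `x̂`
satisfy `|K ∩ L|/k > 2Q(√(−2 log(1−α))) − ε`, where `K = supp(x)`. -/
theorem stmt8 (α ε : ℝ) (hα : α ∈ Set.Ioo (0 : ℝ) 1) (hε : 0 < ε)
    (n : ℕ → ℕ) (hn : ∀ k, k ≤ n k)
    (Ω : ℕ → Type*) [∀ k, MeasurableSpace (Ω k)]
    (μ : ∀ k, Measure (Ω k)) [∀ k, IsProbabilityMeasure (μ k)]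
    (x : ∀ k, Ω k → Fin (n k) → ℝ)
    (K : ∀ k, Finset (Fin (n k))) (hKcard : ∀ k, (K k).card = k)
    (hzero : ∀ k, ∀ ω, ∀ i ∉ K k, x k ω i = 0)
    (hnonzero : ∀ k, ∀ ω, ∀ i ∈ K k, x k ω i ≠ 0)
    (hmeas : ∀ k i, Measurable (fun ω => x k ω i))
    (hindep : ∀ k, iIndepFun
      (fun (i : {i // i ∈ K k}) => fun ω => x k ω i.1) (μ k))
    (hdist : ∀ k, ∀ i ∈ K k, Measure.map (fun ω => x k ω i) (μ k) = gaussianReal 0 1) :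
    Tendsto
      (fun k => μ k {ω | ∀ xhat : Fin (n k) → ℝ,
          (∑ i, |x k ω i - xhat i|) ≤ α * ∑ i, |x k ω i| →
          ∀ L : Finset (Fin (n k)), L.card = k →
            (∀ i ∈ L, ∀ j ∉ L, |xhat j| ≤ |xhat i|) →
            ((spt (x k ω) ∩ L).card : ℝ) / k >
              2 * gaussQ (Real.sqrt (-2 * Real.log (1 - α))) - ε})
      atTop (nhds 1) := by
  obtain ⟨hα0, hα1⟩ := hα
  set t := Real.sqrt (-2 * Real.log (1 - α)) with hts
  have hlog : Real.log (1 - α) < 0 := Real.log_neg (by linarith) (by linarith)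
  have htsq : t ^ 2 = -2 * Real.log (1 - α) := Real.sq_sqrt (by linarith)
  have ht : 0 < t := Real.sqrt_pos.mpr (by linarith)
  have hexp : Real.exp (-(t ^ 2) / 2) = 1 - α := by
    rw [htsq, show -(-2 * Real.log (1 - α)) / 2 = Real.log (1 - α) by ring]
    exact Real.exp_log (by linarith)
  set γ := gaussianReal 0 1 with hγ
  set m := ∫ y, |y| ∂γ with hm
  set c := ∫ y, max (|y| - t) 0 ∂γ with hc
  set q := 2 * gaussQ t with hq
  have hcval : c = (1 - α) * m - t * q := by
    rw [hc, hq, hm, c_val t ht.le, m_val, hexp]; ring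
  set δ := ε * t / 3 with hδdef
  have hδ : 0 < δ := by positivity
  set Vb := ∫ y, y ^ 2 ∂γ with hVb
  have hf₂c : Continuous (fun y : ℝ => max (|y| - t) 0) := by continuity
  have hdom₂ : ∀ y : ℝ, |max (|y| - t) 0| ≤ |y| := by
    intro y
    rw [abs_of_nonneg (le_max_right _ _)]
    rcases le_total (|y| - t) 0 with h | h
    · rw [max_eq_right h]; exact abs_nonneg y
    · rw [max_eq_left h]; linarith
  have hdom₁ : ∀ y : ℝ, abs (abs y) ≤ abs y := fun y => by rw [abs_abs]
  set S₁ : ∀ k, Ω k → ℝ := fun k ω => ∑ i ∈ K k, |x k ω i| with hS₁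
  set S₂ : ∀ k, Ω k → ℝ := fun k ω => ∑ i ∈ K k, max (|x k ω i| - t) 0 with hS₂
  set G : ∀ k, Set (Ω k) := fun k =>
    {ω | (k : ℝ) * δ ≤ |S₁ k ω - k * m|} ∪ {ω | (k : ℝ) * δ ≤ |S₂ k ω - k * c|} with hG
  set b : ℕ → ℝ≥0∞ := fun k => ENNReal.ofReal (Vb / (k * δ ^ 2)) with hb
  have hGbound : ∀ k, 0 < k → μ k (G k) ≤ b k + b k := by
    intro k hk
    refine (measure_union_le _ _).trans (add_le_add ?_ ?_)
    · exact cheb (μ k) (x k) (K k) (hKcard k) (hmeas k) (hindep k) (hdist k)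
        (fun y => |y|) continuous_abs hdom₁ hδ hk
    · exact cheb (μ k) (x k) (K k) (hKcard k) (hmeas k) (hindep k) (hdist k)
        (fun y => max (|y| - t) 0) hf₂c hdom₂ hδ hk
  have hGmeas : ∀ k, MeasurableSet (G k) := by
    intro k
    have h1 : Measurable (S₁ k) :=
      Finset.measurable_sum _ (fun i _ => continuous_abs.measurable.comp (hmeas k i))
    have h2 : Measurable (S₂ k) :=
      Finset.measurable_sum _ (fun i _ => hf₂c.measurable.comp (hmeas k i))
    exact MeasurableSet.union
      (measurableSet_le measurable_const
        (continuous_abs.measurable.comp (h1.sub measurable_const)))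
      (measurableSet_le measurable_const
        (continuous_abs.measurable.comp (h2.sub measurable_const)))
  have hincl : ∀ k, 0 < k → (G k)ᶜ ⊆ {ω | ∀ xhat : Fin (n k) → ℝ,
          (∑ i, |x k ω i - xhat i|) ≤ α * ∑ i, |x k ω i| →
          ∀ L : Finset (Fin (n k)), L.card = k →
            (∀ i ∈ L, ∀ j ∉ L, |xhat j| ≤ |xhat i|) →
            ((spt (x k ω) ∩ L).card : ℝ) / k > q - ε} := by
    intro k hk ω hω
    rw [Set.mem_compl_iff, hG, Set.mem_union, not_or] at hω
    obtain ⟨hω1, hω2⟩ := hω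
    have h1 : |S₁ k ω - k * m| < k * δ := lt_of_not_ge hω1
    have h2 : |S₂ k ω - k * c| < k * δ := lt_of_not_ge hω2
    have h1a : (k : ℝ) * m - k * δ < S₁ k ω := by
      have := (abs_lt.mp h1).1; linarith
    have h2a : S₂ k ω < (k : ℝ) * c + k * δ := by
      have := (abs_lt.mp h2).2; linarith
    intro xhat hle L hLcard hLsup
    have hspt : spt (x k ω) = K k := by
      ext i
      simp only [spt, Finset.mem_filter, Finset.mem_univ, true_and]
      constructor
      · intro h
        by_contra hK
        exact h (hzero k ω i hK)
      · exact hnonzero k ω i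
    rw [hspt]
    have hdet := det_lemma α t ht.le (x k ω) xhat (K k) L (hKcard k) hLcard
      (hzero k ω) hLsup hle
    set s := (((K k ∩ L).card : ℝ)) with hs
    have hdet' : (1 - α) * S₁ k ω ≤ S₂ k ω + s * t := hdet
    have hks : (0 : ℝ) < k := by exact_mod_cast hk
    rw [gt_iff_lt, lt_div_iff₀ hks]
    -- hdet : (1-α) * S₁ ≤ S₂ + s * t
    have e1 : (1 - α) * ((k : ℝ) * m - k * δ) < (1 - α) * S₁ k ω :=
      mul_lt_mul_of_pos_left h1a (by linarith)
    have e3 : s * t > (1 - α) * ((k : ℝ) * m - k * δ) - ((k : ℝ) * c + k * δ) := by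
      linarith [hdet']
    have e4 : (1 - α) * ((k : ℝ) * m - k * δ) - ((k : ℝ) * c + k * δ)
        = (k : ℝ) * (t * q) - (k : ℝ) * δ * (2 - α) := by
      rw [hcval]; ring
    have e5 : (k : ℝ) * δ * (2 - α) ≤ (k : ℝ) * δ * 2 :=
      mul_le_mul_of_nonneg_left (by linarith) (by positivity)
    have e6 : s * t > ((k : ℝ) * q - 2 * k * ε / 3) * t := by
      have : (k : ℝ) * (t * q) - (k : ℝ) * δ * 2 = ((k : ℝ) * q - 2 * k * ε / 3) * t := by
        rw [hδdef]; ring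
      linarith
    have e7 : ((k : ℝ) * q - 2 * k * ε / 3) < s := lt_of_mul_lt_mul_right e6 ht.le
    have e8 : (0 : ℝ) < (k : ℝ) * ε := mul_pos hks hε
    have e9 : (q - ε) * (k : ℝ) = (k : ℝ) * q - (k : ℝ) * ε := by ring
    linarith [e7, e8, e9]
  -- limit argument
  have hupper : ∀ k : ℕ, μ k {ω | ∀ xhat : Fin (n k) → ℝ,
          (∑ i, |x k ω i - xhat i|) ≤ α * ∑ i, |x k ω i| →
          ∀ L : Finset (Fin (n k)), L.card = k →
            (∀ i ∈ L, ∀ j ∉ L, |xhat j| ≤ |xhat i|) →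
            ((spt (x k ω) ∩ L).card : ℝ) / k > q - ε} ≤ 1 := fun k => prob_le_one
  have hlower : ∀ᶠ k in atTop, 1 - (b k + b k) ≤ μ k {ω | ∀ xhat : Fin (n k) → ℝ,
          (∑ i, |x k ω i - xhat i|) ≤ α * ∑ i, |x k ω i| →
          ∀ L : Finset (Fin (n k)), L.card = k →
            (∀ i ∈ L, ∀ j ∉ L, |xhat j| ≤ |xhat i|) →
            ((spt (x k ω) ∩ L).card : ℝ) / k > q - ε} := by
    filter_upwards [eventually_ge_atTop 1] with k hk
    have hk0 : 0 < k := hk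
    calc 1 - (b k + b k) ≤ 1 - μ k (G k) := tsub_le_tsub_left (hGbound k hk0) 1
      _ = μ k (G k)ᶜ := (prob_compl_eq_one_sub (hGmeas k)).symm
      _ ≤ _ := measure_mono (hincl k hk0)
  have hr : Tendsto (fun k : ℕ => Vb / (k * δ ^ 2)) atTop (nhds 0) := by
    have h0 := tendsto_const_div_atTop_nhds_zero_nat (Vb / δ ^ 2)
    refine h0.congr fun k => ?_
    rw [div_div, mul_comm]
  have hb0 : Tendsto b atTop (nhds 0) := by
    have := ENNReal.tendsto_ofReal hr
    simpa using this
  have hsum0 : Tendsto (fun k => b k + b k) atTop (nhds 0) := by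
    simpa using hb0.add hb0
  have hlow : Tendsto (fun k => 1 - (b k + b k)) atTop (nhds 1) := by
    have h1 : Tendsto (fun _ : ℕ => (1 : ℝ≥0∞)) atTop (nhds 1) := tendsto_const_nhds
    have := ENNReal.Tendsto.sub h1 hsum0 (Or.inl ENNReal.one_ne_top)
    simpa using this
  exact tendsto_of_tendsto_of_tendsto_of_le_of_le' hlow tendsto_const_nhds hlower
    (Filter.Eventually.of_forall hupper)
end

section
/- Let f : ℝ → ℝ be a continuous, symmetric (f(−x) = f(x)) probability density function, positive on (0,∞), such that ∫_a^∞ x² f(x) dx < ∞ for every a > 0. Let X, X_1, …, X_N be i.i.d. random variables with density f, let S_N = ∑_{i=1}^N |X_i|, and for 1 ≤ M < N let S_M be the sum of the M largest values among |X_1|,…,|X_N|. Fix γ ∈ (0,1) and set M = ⌊γN⌋. Then for every sufficiently small ε > 0, P( | S_M/S_N − (1 − 2 ∫_0^{Ψ_f(γ/2)} x f(x) dx / E|X| ) | > ε ) → 0 as N → ∞. -/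
open Finset MeasureTheory ProbabilityTheory Filter

open scoped NNReal ENNReal Topology

lemma topSum_lower {N M : ℕ} (y : ℕ → ℝ) (hy : ∀ i, 0 ≤ y i) {B : Finset ℕ}
    (hBN : B ⊆ Finset.range N) (hBM : B.card ≤ M) (hMN : M ≤ N) :
    ∑ i ∈ B, y i ≤ topSum N M y := by
  obtain ⟨T, hBT, hTN, hT⟩ := Finset.exists_subsuperset_card_eq hBN hBM
    (by simpa using hMN)
  have hne : ((Finset.range N).powersetCard M).Nonempty :=
    Finset.powersetCard_nonempty.2 (by simpa using hMN)
  rw [topSum, dif_pos hne]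
  calc ∑ i ∈ B, y i ≤ ∑ i ∈ T, y i :=
        Finset.sum_le_sum_of_subset_of_nonneg hBT (fun i _ _ => hy i)
    _ ≤ _ := Finset.le_sup' (fun T => ∑ i ∈ T, y i)
        (Finset.mem_powersetCard.2 ⟨hTN, hT⟩)

lemma topSum_upper {N M : ℕ} (y : ℕ → ℝ) (c : ℝ) (hc : 0 ≤ c)
    (hM : M ≤ ((Finset.range N).filter (fun i => c < y i)).card) :
    topSum N M y ≤ ∑ i ∈ (Finset.range N).filter (fun i => c < y i), y i := by
  classical
  set B := (Finset.range N).filter (fun i => c < y i) with hB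
  have hBnn : (0:ℝ) ≤ ∑ i ∈ B, y i :=
    Finset.sum_nonneg fun i hi => le_of_lt (lt_of_le_of_lt hc (Finset.mem_filter.1 hi).2)
  rw [topSum]
  split_ifs with hne
  · apply Finset.sup'_le
    intro T hT
    rw [Finset.mem_powersetCard] at hT
    obtain ⟨hTN, hTcard⟩ := hT
    have hcard : (T \ B).card ≤ (B \ T).card := by
      have h1 : (T ∩ B).card + (T \ B).card = T.card := Finset.card_inter_add_card_sdiff T B
      have h2 : (B ∩ T).card + (B \ T).card = B.card := Finset.card_inter_add_card_sdiff B T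
      rw [Finset.inter_comm] at h2
      omega
    have h1 : ∑ i ∈ T \ B, y i ≤ ((T \ B).card : ℝ) * c := by
      rw [← nsmul_eq_mul]
      apply Finset.sum_le_card_nsmul
      intro i hi
      have hiB := (Finset.mem_sdiff.1 hi).2
      have hiN := hTN (Finset.mem_sdiff.1 hi).1
      by_contra hlt
      exact hiB (Finset.mem_filter.2 ⟨hiN, by push_neg at hlt; exact hlt⟩)
    have h2 : ((B \ T).card : ℝ) * c ≤ ∑ i ∈ B \ T, y i := by
      rw [← nsmul_eq_mul]
      apply Finset.card_nsmul_le_sum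
      intro i hi
      exact le_of_lt (Finset.mem_filter.1 (Finset.mem_sdiff.1 hi).1).2
    calc ∑ i ∈ T, y i = ∑ i ∈ T ∩ B, y i + ∑ i ∈ T \ B, y i :=
          (Finset.sum_inter_add_sum_sdiff T B y).symm
      _ ≤ ∑ i ∈ T ∩ B, y i + ((T \ B).card : ℝ) * c := by linarith
      _ ≤ ∑ i ∈ T ∩ B, y i + ((B \ T).card : ℝ) * c := by gcongr
      _ ≤ ∑ i ∈ T ∩ B, y i + ∑ i ∈ B \ T, y i := by linarith
      _ = ∑ i ∈ B ∩ T, y i + ∑ i ∈ B \ T, y i := by rw [Finset.inter_comm]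
      _ = ∑ i ∈ B, y i := Finset.sum_inter_add_sum_sdiff B T y
  · exact hBnn

lemma integral_density {f : ℝ → ℝ} (hf : Measurable f) (hnn : ∀ t, 0 ≤ f t)
    {Ω : Type*} [MeasurableSpace Ω] {μ : Measure Ω} {X : Ω → ℝ} (hX : Measurable X)
    (hdist : Measure.map X μ = MeasureTheory.volume.withDensity (fun t => ENNReal.ofReal (f t)))
    (g : ℝ → ℝ) (hg : Measurable g) :
    ∫ ω, g (X ω) ∂μ = ∫ t, f t * g t := by
  rw [← integral_map hX.aemeasurable hg.aestronglyMeasurable, hdist]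
  rw [show (fun t => ENNReal.ofReal (f t)) = (fun t => ((Real.toNNReal (f t) : ℝ≥0) : ℝ≥0∞))
    from rfl]
  rw [integral_withDensity_eq_integral_smul (f := fun t => Real.toNNReal (f t))
    (measurable_real_toNNReal.comp hf) g]
  congr 1; funext t
  simp [NNReal.smul_def, Real.coe_toNNReal _ (hnn t)]

lemma integrable_density {f : ℝ → ℝ} (hf : Measurable f) (hnn : ∀ t, 0 ≤ f t)
    {Ω : Type*} [MeasurableSpace Ω] {μ : Measure Ω} {X : Ω → ℝ} (hX : Measurable X)
    (hdist : Measure.map X μ = MeasureTheory.volume.withDensity (fun t => ENNReal.ofReal (f t)))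
    (g : ℝ → ℝ) (hg : Measurable g) :
    Integrable (fun ω => g (X ω)) μ ↔ Integrable (fun t => f t * g t) := by
  rw [show (fun ω => g (X ω)) = g ∘ X from rfl,
    ← integrable_map_measure hg.aestronglyMeasurable hX.aemeasurable, hdist]
  rw [show (fun t => ENNReal.ofReal (f t)) = (fun t => ((Real.toNNReal (f t) : ℝ≥0) : ℝ≥0∞))
    from rfl]
  rw [integrable_withDensity_iff_integrable_smul (f := fun t => Real.toNNReal (f t))
    (measurable_real_toNNReal.comp hf) (g := g)]
  apply integrable_congr
  filter_upwards with t
  simp [NNReal.smul_def, Real.coe_toNNReal _ (hnn t), mul_comm]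

lemma integrable_comp_abs' {g : ℝ → ℝ} (h : IntegrableOn g (Set.Ioi (0:ℝ))) :
    Integrable (fun x => g |x|) := by
  have hIoi : IntegrableOn (fun x => g |x|) (Set.Ioi 0) :=
    h.congr_fun (fun x hx => by rw [abs_of_pos hx]) measurableSet_Ioi
  have hIic : IntegrableOn (fun x => g |x|) (Set.Iic 0) := by
    rw [← Measure.map_neg_eq_self (volume : Measure ℝ)]
    have m : MeasurableEmbedding fun x : ℝ => -x := (Homeomorph.neg ℝ).measurableEmbedding
    rw [m.integrableOn_map_iff]
    simp_rw [Function.comp_def, abs_neg, Set.neg_preimage, Set.neg_Iic, neg_zero]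
    exact Iff.mpr integrableOn_Ici_iff_integrableOn_Ioi hIoi
  have := hIic.union hIoi
  rwa [Set.Iic_union_Ioi, integrableOn_univ] at this

noncomputable def Ltail (f : ℝ → ℝ) (c : ℝ) : ℝ := 2 * ∫ s in Set.Ioi c, s * f s
noncomputable def ptail (f : ℝ → ℝ) (c : ℝ) : ℝ := 2 * ∫ s in Set.Ioi c, f s

lemma Ltail_split {f : ℝ → ℝ} (hint : IntegrableOn (fun s => s * f s) (Set.Ioi (0:ℝ)))
    {c c' : ℝ} (h0 : 0 ≤ c) (h : c ≤ c') :
    Ltail f c = 2 * (∫ s in Set.Ioc c c', s * f s) + Ltail f c' := by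
  unfold Ltail
  have hu : Set.Ioc c c' ∪ Set.Ioi c' = Set.Ioi c := Set.Ioc_union_Ioi_eq_Ioi h
  rw [← hu, setIntegral_union (Set.Ioc_disjoint_Ioi le_rfl) measurableSet_Ioi
    (hint.mono_set (Set.Ioc_subset_Ioi_self.trans (Set.Ioi_subset_Ioi h0)))
    (hint.mono_set (Set.Ioi_subset_Ioi (h0.trans h)))]
  ring

lemma ptail_split {f : ℝ → ℝ} (hint : Integrable f)
    {c c' : ℝ} (h : c ≤ c') :
    ptail f c = 2 * (∫ s in Set.Ioc c c', f s) + ptail f c' := by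
  unfold ptail
  have hu : Set.Ioc c c' ∪ Set.Ioi c' = Set.Ioi c := Set.Ioc_union_Ioi_eq_Ioi h
  rw [← hu, setIntegral_union (Set.Ioc_disjoint_Ioi le_rfl) measurableSet_Ioi
    hint.integrableOn hint.integrableOn]
  ring

set_option maxHeartbeats 2000000 in
/-- Concentration of the partial sums of order statistics of i.i.d. random variables with a
symmetric density `f`: with `M = ⌊γN⌋` and `a = Ψ_f(γ/2)`,
`S_M/S_N → 1 − 2∫₀^a x f(x) dx / E|X|` in probability. -/
theorem stmt9 (f : ℝ → ℝ) (hcont : Continuous f) (hsymm : ∀ t, f (-t) = f t)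
    (hpos : ∀ t : ℝ, 0 < t → 0 < f t) (hnonneg : ∀ t, 0 ≤ f t)
    (hpdf : ∫ t, f t = 1)
    (htail : ∀ b : ℝ, 0 < b → IntegrableOn (fun t => t ^ 2 * f t) (Set.Ioi b))
    {Ω : Type*} [MeasurableSpace Ω] (μ : Measure Ω) [IsProbabilityMeasure μ]
    (X : ℕ → Ω → ℝ) (hmeas : ∀ i, Measurable (X i))
    (hindep : iIndepFun X μ)
    (hdist : ∀ i, Measure.map (X i) μ =
      MeasureTheory.volume.withDensity (fun t => ENNReal.ofReal (f t)))
    (γ : ℝ) (hγ : γ ∈ Set.Ioo (0 : ℝ) 1)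
    (a : ℝ) (ha : 0 ≤ a) (hQa : (∫ t in Set.Ioi a, f t) = γ / 2) :
    ∃ ε₀ > 0, ∀ ε : ℝ, 0 < ε → ε < ε₀ →
      Tendsto
        (fun N => μ {ω | |topSum N ⌊γ * N⌋₊ (fun i => |X i ω|) /
            (∑ i ∈ Finset.range N, |X i ω|) -
            (1 - 2 * (∫ t in (0:ℝ)..a, t * f t) / (∫ t, |t| * f t))| > ε})
        atTop (nhds 0) := by
  obtain ⟨hγ0, hγ1⟩ := hγ
  have hfm : Measurable f := hcont.measurable
  have habs : ∀ t : ℝ, f |t| = f t := by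
    intro t
    rcases le_or_gt 0 t with h | h
    · rw [abs_of_nonneg h]
    · rw [abs_of_neg h, hsymm]
  -- integrability of f
  have hInt_f : Integrable f := by
    by_contra h
    rw [integral_undef h] at hpdf
    norm_num at hpdf
  -- integrability of s * f s on Ioi 0
  have hIoi_tf : IntegrableOn (fun s => s * f s) (Set.Ioi (0:ℝ)) := by
    have h1 : IntegrableOn (fun s => s * f s) (Set.Ioc (0:ℝ) 1) :=
      (continuous_id'.mul hcont).integrableOn_Ioc
    have h2 : IntegrableOn (fun s => s * f s) (Set.Ioi (1:ℝ)) := by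
      apply Integrable.mono (htail 1 one_pos)
        ((continuous_id'.mul hcont).aestronglyMeasurable.restrict)
      rw [ae_restrict_iff' measurableSet_Ioi]
      filter_upwards with s hs
      have h1s : (1:ℝ) ≤ s := le_of_lt hs
      have h0s : (0:ℝ) ≤ s := by linarith
      show ‖s * f s‖ ≤ ‖s ^ 2 * f s‖
      rw [Real.norm_eq_abs, Real.norm_eq_abs, abs_of_nonneg (mul_nonneg h0s (hnonneg s)),
        abs_of_nonneg (mul_nonneg (pow_nonneg h0s 2) (hnonneg s))]
      nlinarith [mul_nonneg (mul_nonneg h0s (sub_nonneg.2 h1s)) (hnonneg s)]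
    have := h1.union h2
    rwa [Set.Ioc_union_Ioi_eq_Ioi (le_of_lt one_pos)] at this
  -- integrability of |t| * f t on ℝ
  have hInt_absf : Integrable (fun t => |t| * f t) := by
    have := integrable_comp_abs' hIoi_tf
    apply this.congr
    filter_upwards with t
    simp only [habs t]
  -- E and its value
  have hE2 : (∫ t, |t| * f t) = Ltail f 0 := by
    unfold Ltail
    rw [← integral_comp_abs (f := fun s => s * f s)]
    congr 1; funext t; rw [habs t]
  have hEpos : 0 < ∫ t, |t| * f t := by
    rw [hE2]
    unfold Ltail
    have h1 : (0:ℝ) < ∫ s in (1:ℝ)..2, s * f s := by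
      apply intervalIntegral.intervalIntegral_pos_of_pos_on
        ((continuous_id'.mul hcont).intervalIntegrable 1 2)
      · intro x hx
        exact mul_pos (by linarith [hx.1]) (hpos x (by linarith [hx.1]))
      · norm_num
    rw [intervalIntegral.integral_of_le (by norm_num : (1:ℝ) ≤ 2)] at h1
    have h2 : (∫ s in Set.Ioc (1:ℝ) 2, s * f s) ≤ ∫ s in Set.Ioi (0:ℝ), s * f s := by
      apply setIntegral_mono_set hIoi_tf
      · rw [Filter.EventuallyLE]
        rw [ae_restrict_iff' measurableSet_Ioi]
        filter_upwards with s hs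
        exact mul_nonneg (le_of_lt hs) (hnonneg s)
      · filter_upwards with s hs
        exact (lt_trans zero_lt_one hs.1 : (0:ℝ) < s)
    linarith
  -- a is positive
  have hapos : 0 < a := by
    rcases lt_or_eq_of_le ha with h | h
    · exact h
    · exfalso
      have h1 : (∫ t, f t) = 2 * ∫ s in Set.Ioi (0:ℝ), f s := by
        rw [← integral_comp_abs (f := f)]
        congr 1; funext t; rw [habs t]
      rw [← h] at hQa
      rw [hpdf, hQa] at h1
      linarith
  -- compact bound for s * f s on [0, 2a]
  obtain ⟨C, hC⟩ := (isCompact_Icc (a := (0:ℝ)) (b := 2*a)).exists_bound_of_continuousOn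
    ((continuous_id'.mul hcont).continuousOn)
  have hC0 : 0 ≤ C := le_trans (norm_nonneg _) (hC 0 ⟨le_rfl, by linarith⟩)
  -- bound on increments of Ltail
  have hLdiff : ∀ c c' : ℝ, 0 ≤ c → c ≤ c' → c' ≤ 2*a →
      Ltail f c - Ltail f c' ∈ Set.Icc 0 (2 * C * (c' - c)) := by
    intro c c' h0 hcc' h2a
    have hsplit := Ltail_split hIoi_tf h0 hcc'
    have heq : Ltail f c - Ltail f c' = 2 * ∫ s in Set.Ioc c c', s * f s := by
      rw [hsplit]; ring
    constructor
    · rw [heq]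
      have : (0:ℝ) ≤ ∫ s in Set.Ioc c c', s * f s := by
        apply setIntegral_nonneg measurableSet_Ioc
        intro s hs
        exact mul_nonneg (le_trans h0 (le_of_lt hs.1)) (hnonneg s)
      linarith
    · rw [heq]
      have h3 : (∫ s in Set.Ioc c c', s * f s) = ∫ s in c..c', s * f s :=
        (intervalIntegral.integral_of_le hcc').symm
      rw [h3]
      have h4 : ‖∫ s in c..c', s * f s‖ ≤ C * |c' - c| := by
        apply intervalIntegral.norm_integral_le_of_norm_le_const
        intro x hx
        rw [Set.uIoc_of_le hcc'] at hx
        exact hC x ⟨le_trans h0 (le_of_lt hx.1), le_trans hx.2 h2a⟩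
      rw [Real.norm_eq_abs, abs_of_nonneg (by linarith [hcc'] : (0:ℝ) ≤ c' - c)] at h4
      have := le_trans (le_abs_self _) h4
      linarith
  -- strict monotonicity of ptail
  have hpgap : ∀ c c' : ℝ, 0 < c → c < c' → ptail f c' < ptail f c := by
    intro c c' h0 hcc'
    have hsplit := ptail_split hInt_f (le_of_lt hcc')
    have hpos' : (0:ℝ) < ∫ s in Set.Ioc c c', f s := by
      have h1 : (0:ℝ) < ∫ s in c..c', f s := by
        apply intervalIntegral.intervalIntegral_pos_of_pos_on
          (hcont.intervalIntegrable c c')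
        · intro x hx
          exact hpos x (lt_trans h0 hx.1)
        · exact hcc'
      rwa [intervalIntegral.integral_of_le (le_of_lt hcc')] at h1
    linarith [hsplit]
  have hpa : ptail f a = γ := by unfold ptail; rw [hQa]; ring

  set E := ∫ t, |t| * f t with hEdef
  set g2 : ℝ → ℝ → ℝ := fun c t => if c < |t| then |t| else 0 with hg2def
  set g3 : ℝ → ℝ → ℝ := fun c t => if c < |t| then (1:ℝ) else 0 with hg3def
  have hg2m : ∀ c, Measurable (g2 c) := fun c =>
    Measurable.ite (measurableSet_lt measurable_const measurable_abs)
      measurable_abs measurable_const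
  have hg3m : ∀ c, Measurable (g3 c) := fun c =>
    Measurable.ite (measurableSet_lt measurable_const measurable_abs)
      measurable_const measurable_const
  have hSL : ∀ g : ℝ → ℝ, Measurable g → Integrable (fun t => f t * g t) volume →
      ∀ᵐ ω ∂μ, Tendsto (fun n : ℕ => (∑ i ∈ range n, g (X i ω)) / n) atTop
        (𝓝 (∫ t, f t * g t)) := by
    intro g hg hint
    have h1 : Integrable (fun ω => g (X 0 ω)) μ :=
      (integrable_density hfm hnonneg (hmeas 0) (hdist 0) g hg).2 hint
    have h2 : Pairwise (Function.onFun (IndepFun · · μ) fun i ω => g (X i ω)) := by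
      intro i j hij
      exact (hindep.indepFun hij).comp hg hg
    have h3 : ∀ i, IdentDistrib (fun ω => g (X i ω)) (fun ω => g (X 0 ω)) μ μ := by
      intro i
      have hid : IdentDistrib (X i) (X 0) μ μ :=
        ⟨(hmeas i).aemeasurable, (hmeas 0).aemeasurable, by rw [hdist i, hdist 0]⟩
      exact hid.comp hg
    have h4 := strong_law_ae_real (fun i ω => g (X i ω)) h1 h2 h3
    have h5 : (μ[fun ω => g (X 0 ω)]) = ∫ t, f t * g t :=
      integral_density hfm hnonneg (hmeas 0) (hdist 0) g hg
    rw [h5] at h4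
    exact h4.mono fun ω hω => by simpa using hω
  have hval1 : (∫ t, f t * |t|) = E := by
    rw [hEdef]; congr 1; funext t; rw [mul_comm]
  have hint1 : Integrable (fun t => f t * |t|) := by
    apply hInt_absf.congr
    filter_upwards with t; rw [mul_comm]
  have hint2 : ∀ c : ℝ, Integrable (fun t => f t * g2 c t) := by
    intro c
    apply hInt_absf.mono ((hfm.mul (hg2m c)).aestronglyMeasurable)
    filter_upwards with t
    rw [Real.norm_eq_abs, Real.norm_eq_abs, hg2def]
    simp only [Pi.mul_apply]
    by_cases h : c < |t|
    · rw [if_pos h, mul_comm]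
    · rw [if_neg h, mul_zero, abs_zero]
      exact abs_nonneg _
  have hint3 : ∀ c : ℝ, Integrable (fun t => f t * g3 c t) := by
    intro c
    apply hInt_f.mono ((hfm.mul (hg3m c)).aestronglyMeasurable)
    filter_upwards with t
    rw [Real.norm_eq_abs, Real.norm_eq_abs, hg3def]
    simp only [Pi.mul_apply]
    by_cases h : c < |t|
    · rw [if_pos h, mul_one]
    · rw [if_neg h, mul_zero, abs_zero]
      exact abs_nonneg _
  have hval2 : ∀ c : ℝ, 0 ≤ c → (∫ t, f t * g2 c t) = Ltail f c := by
    intro c hc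
    have h1 : (fun t => f t * g2 c t)
        = fun x => (fun s => f s * (if c < s then s else 0)) |x| := by
      funext t; rw [hg2def]; simp only []; rw [habs t]
    rw [h1, integral_comp_abs (f := fun s => f s * (if c < s then s else 0))]
    unfold Ltail
    congr 1
    have h2 : Set.EqOn (fun s => f s * (if c < s then s else 0))
        (Set.indicator (Set.Ioi c) (fun s => s * f s)) (Set.Ioi 0) := by
      intro s _
      by_cases h : c < s <;>
        simp [Set.indicator_apply, Set.mem_Ioi, h, mul_comm]
    rw [setIntegral_congr_fun measurableSet_Ioi h2,
      setIntegral_indicator measurableSet_Ioi, Set.Ioi_inter_Ioi, sup_eq_right.2 hc]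
  have hval3 : ∀ c : ℝ, 0 ≤ c → (∫ t, f t * g3 c t) = ptail f c := by
    intro c hc
    have h1 : (fun t => f t * g3 c t)
        = fun x => (fun s => f s * (if c < s then 1 else 0)) |x| := by
      funext t; rw [hg3def]; simp only []; rw [habs t]
    rw [h1, integral_comp_abs (f := fun s => f s * (if c < s then 1 else 0))]
    unfold ptail
    congr 1
    have h2 : Set.EqOn (fun s => f s * (if c < s then (1:ℝ) else 0))
        (Set.indicator (Set.Ioi c) f) (Set.Ioi 0) := by
      intro s _
      by_cases h : c < s <;>
        simp [Set.indicator_apply, Set.mem_Ioi, h]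
    rw [setIntegral_congr_fun measurableSet_Ioi h2,
      setIntegral_indicator measurableSet_Ioi, Set.Ioi_inter_Ioi, sup_eq_right.2 hc]
  set δ : ℕ → ℝ := fun k => a / (k + 2) with hδdef
  have hδpos : ∀ k, 0 < δ k := fun k => div_pos hapos (by positivity)
  have hδlea : ∀ k : ℕ, δ k ≤ a / 2 := by
    intro k
    rw [hδdef]
    apply div_le_div_of_nonneg_left ha two_pos
    have : (0:ℝ) ≤ (k:ℝ) := Nat.cast_nonneg k
    linarith
  have hP : ∀ c : ℝ, 0 ≤ c → ∀ᵐ ω ∂μ,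
      Tendsto (fun n : ℕ => (∑ i ∈ range n, g2 c (X i ω)) / n) atTop (𝓝 (Ltail f c)) ∧
      Tendsto (fun n : ℕ => (∑ i ∈ range n, g3 c (X i ω)) / n) atTop (𝓝 (ptail f c)) := by
    intro c hc
    have h1 := hSL (g2 c) (hg2m c) (hint2 c)
    have h2 := hSL (g3 c) (hg3m c) (hint3 c)
    rw [hval2 c hc] at h1
    rw [hval3 c hc] at h2
    exact h1.and h2
  have hS_ae : ∀ᵐ ω ∂μ,
      Tendsto (fun n : ℕ => (∑ i ∈ range n, |X i ω|) / n) atTop (𝓝 E) := by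
    have h1 := hSL (fun t => |t|) measurable_abs (by simpa using hint1)
    rw [show (∫ t, f t * (fun t => |t|) t) = E by simpa using hval1] at h1
    exact h1
  have hgood : ∀ᵐ ω ∂μ,
      (Tendsto (fun n : ℕ => (∑ i ∈ range n, |X i ω|) / n) atTop (𝓝 E)) ∧
      ∀ k : ℕ,
        (Tendsto (fun n : ℕ => (∑ i ∈ range n, g2 (a - δ k) (X i ω)) / n) atTop
            (𝓝 (Ltail f (a - δ k))) ∧
         Tendsto (fun n : ℕ => (∑ i ∈ range n, g3 (a - δ k) (X i ω)) / n) atTop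
            (𝓝 (ptail f (a - δ k)))) ∧
        (Tendsto (fun n : ℕ => (∑ i ∈ range n, g2 (a + δ k) (X i ω)) / n) atTop
            (𝓝 (Ltail f (a + δ k))) ∧
         Tendsto (fun n : ℕ => (∑ i ∈ range n, g3 (a + δ k) (X i ω)) / n) atTop
            (𝓝 (ptail f (a + δ k)))) := by
    apply hS_ae.and
    rw [ae_all_iff]
    intro k
    exact (hP (a - δ k) (by linarith [hδlea k, hapos])).and
      (hP (a + δ k) (by linarith [le_of_lt (hδpos k)]))

  -- the limiting ratio
  set ρ : ℝ := 1 - 2 * (∫ t in (0:ℝ)..a, t * f t) / E with hρdef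
  have hEne : E ≠ 0 := ne_of_gt hEpos
  have hρL : ρ = Ltail f a / E := by
    have hIa : (∫ t in (0:ℝ)..a, t * f t) = ∫ s in Set.Ioc 0 a, s * f s :=
      intervalIntegral.integral_of_le ha
    have hsplit := Ltail_split hIoi_tf le_rfl ha
    have h2 : E = 2 * (∫ s in Set.Ioc 0 a, s * f s) + Ltail f a := by rw [hE2]; exact hsplit
    rw [hρdef, hIa]
    field_simp
    linarith
  -- almost sure convergence of the ratio
  have hae : ∀ᵐ ω ∂μ, Tendsto (fun N => topSum N ⌊γ * N⌋₊ (fun i => |X i ω|) /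
      ∑ i ∈ Finset.range N, |X i ω|) atTop (𝓝 ρ) := by
    filter_upwards [hgood] with ω hω
    obtain ⟨hS, hk⟩ := hω
    rw [hρL, Metric.tendsto_atTop]
    intro ε hε
    -- choose k so that the increments of Ltail over [a - δ k, a + δ k] are small
    obtain ⟨k, hkk⟩ := exists_nat_gt (8 * C * a / (E * ε))
    have hk2pos : (0:ℝ) < (k:ℝ) + 2 := by positivity
    have hδk : 2 * C * δ k ≤ E * ε / 4 := by
      have hEε : 0 < E * ε := mul_pos hEpos hε
      have hk2 : 8 * C * a / (E * ε) < (k:ℝ) + 2 := by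
        have : (0:ℝ) ≤ 2 := by norm_num
        linarith
      rw [div_lt_iff₀ hEε] at hk2
      have heq : 2 * C * δ k = (2 * C * a) / ((k:ℝ) + 2) := by rw [hδdef]; ring
      rw [heq, div_le_iff₀ hk2pos]
      nlinarith
    set cm : ℝ := a - δ k with hcmdef
    set cp : ℝ := a + δ k with hcpdef
    have hδk2 : δ k ≤ a / 2 := hδlea k
    have hδkpos : 0 < δ k := hδpos k
    have hcmpos : 0 < cm := by rw [hcmdef]; linarith
    have hcp2a : cp ≤ 2 * a := by rw [hcpdef]; linarith
    have hpP : ptail f cp < γ := by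
      rw [← hpa]; exact hpgap a cp hapos (by rw [hcpdef]; linarith)
    have hpM : γ < ptail f cm := by
      rw [← hpa]; exact hpgap cm a hcmpos (by rw [hcmdef]; linarith)
    have hLM := hLdiff cm a (le_of_lt hcmpos) (by rw [hcmdef]; linarith) (by linarith)
    have hLP := hLdiff a cp ha (by rw [hcpdef]; linarith) hcp2a
    have hLM1 : Ltail f cm - Ltail f a ≤ E * ε / 4 := by
      have := hLM.2
      have heq : 2 * C * (a - cm) = 2 * C * δ k := by rw [hcmdef]; ring
      rw [heq] at this
      linarith
    have hLM0 : 0 ≤ Ltail f cm - Ltail f a := hLM.1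
    have hLP1 : Ltail f a - Ltail f cp ≤ E * ε / 4 := by
      have := hLP.2
      have heq : 2 * C * (cp - a) = 2 * C * δ k := by rw [hcpdef]; ring
      rw [heq] at this
      linarith
    have hLP0 : 0 ≤ Ltail f a - Ltail f cp := hLP.1
    obtain ⟨⟨hv2, hv3⟩, ⟨hu2, hu3⟩⟩ := hk k
    -- limits of the normalized quantities
    have hu := hu2.div hS hEne
    have hv := hv2.div hS hEne
    -- division bounds
    have hLcpdiv : Ltail f a / E - ε / 4 ≤ Ltail f cp / E := by
      have h1 : Ltail f a - E * (ε / 4) ≤ Ltail f cp := by linarith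
      have h2 := (div_le_div_iff_of_pos_right hEpos).2 h1
      rw [sub_div, mul_div_cancel_left₀ _ hEne] at h2
      linarith
    have hLcmdiv : Ltail f cm / E ≤ Ltail f a / E + ε / 4 := by
      have h1 : Ltail f cm ≤ Ltail f a + E * (ε / 4) := by linarith
      have h2 := (div_le_div_iff_of_pos_right hEpos).2 h1
      rw [add_div, mul_div_cancel_left₀ _ hEne] at h2
      linarith
    -- eventual statements
    have ev1 : ∀ᶠ n : ℕ in atTop, 1 ≤ n := eventually_ge_atTop 1
    have ev2 : ∀ᶠ n : ℕ in atTop, (∑ i ∈ range n, g3 cp (X i ω)) / n < γ :=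
      hu3.eventually_lt_const hpP
    have ev3 : ∀ᶠ n : ℕ in atTop, γ < (∑ i ∈ range n, g3 cm (X i ω)) / n :=
      hv3.eventually_const_lt hpM
    have ev4 : ∀ᶠ n : ℕ in atTop, E / 2 < (∑ i ∈ range n, |X i ω|) / n :=
      hS.eventually_const_lt (by linarith)
    have ev5 : ∀ᶠ n : ℕ in atTop, Ltail f cp / E - ε / 4 <
        ((∑ i ∈ range n, g2 cp (X i ω)) / n) / ((∑ i ∈ range n, |X i ω|) / n) :=
      hu.eventually_const_lt (by
        have : (0:ℝ) < ε / 4 := by linarith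
        linarith)
    have ev6 : ∀ᶠ n : ℕ in atTop,
        ((∑ i ∈ range n, g2 cm (X i ω)) / n) / ((∑ i ∈ range n, |X i ω|) / n) <
          Ltail f cm / E + ε / 4 :=
      hv.eventually_lt_const (by
        have : (0:ℝ) < ε / 4 := by linarith
        linarith)
    obtain ⟨N₀, hN₀⟩ := eventually_atTop.1
      (((((ev1.and ev2).and ev3).and ev4).and ev5).and ev6)
    refine ⟨N₀, fun n hn => ?_⟩
    obtain ⟨⟨⟨⟨⟨h1n, h2n⟩, h3n⟩, h4n⟩, h5n⟩, h6n⟩ := hN₀ n hn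
    have hnpos : (0:ℝ) < n := by exact_mod_cast h1n
    have hnne : (n:ℝ) ≠ 0 := ne_of_gt hnpos
    set S : ℝ := ∑ i ∈ range n, |X i ω| with hSdef
    have hSpos : 0 < S := by
      have h1 : 0 < S / n := lt_trans (by linarith) h4n
      have := mul_pos h1 hnpos
      rwa [div_mul_cancel₀ _ hnne] at this
    have hSne : S ≠ 0 := ne_of_gt hSpos
    -- counting identities
    have hcard : ∀ c : ℝ, ((((range n).filter (fun i => c < |X i ω|)).card : ℝ))
        = ∑ i ∈ range n, g3 c (X i ω) := by
      intro c
      rw [hg3def]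
      simp only []
      rw [Finset.sum_boole]
    set M : ℕ := ⌊γ * n⌋₊ with hMdef
    have hγn0 : 0 ≤ γ * n := mul_nonneg (le_of_lt hγ0) (Nat.cast_nonneg n)
    have hMn : M ≤ n := by
      have h : γ * n ≤ (n:ℝ) := mul_le_of_le_one_left hnpos.le (le_of_lt hγ1)
      calc M ≤ ⌊(n:ℝ)⌋₊ := Nat.floor_le_floor h
        _ = n := Nat.floor_natCast n
    have hMcardP : ((range n).filter (fun i => cp < |X i ω|)).card ≤ M := by
      apply Nat.le_floor
      have h1 : (∑ i ∈ range n, g3 cp (X i ω)) < γ * n := by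
        rw [div_lt_iff₀ hnpos] at h2n
        linarith
      rw [← hcard cp] at h1
      exact le_of_lt h1
    have hMcardM : M ≤ ((range n).filter (fun i => cm < |X i ω|)).card := by
      have h1 : γ * n < ∑ i ∈ range n, g3 cm (X i ω) := by
        rw [lt_div_iff₀ hnpos] at h3n
        linarith
      rw [← hcard cm] at h1
      have h2 : (M:ℝ) < ((range n).filter (fun i => cm < |X i ω|)).card :=
        lt_of_le_of_lt (Nat.floor_le hγn0) h1
      exact_mod_cast le_of_lt h2
    -- the sandwich
    have hsum2 : ∀ c : ℝ, ∑ i ∈ (range n).filter (fun i => c < |X i ω|), |X i ω|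
        = ∑ i ∈ range n, g2 c (X i ω) := by
      intro c
      rw [Finset.sum_filter, hg2def]
    have hlow : ∑ i ∈ range n, g2 cp (X i ω) ≤ topSum n M (fun i => |X i ω|) := by
      rw [← hsum2 cp]
      exact topSum_lower (fun i => |X i ω|) (fun i => abs_nonneg _)
        (Finset.filter_subset _ _) hMcardP hMn
    have hup : topSum n M (fun i => |X i ω|) ≤ ∑ i ∈ range n, g2 cm (X i ω) := by
      rw [← hsum2 cm]
      exact topSum_upper (fun i => |X i ω|) cm (le_of_lt hcmpos) hMcardM
    -- pass to ratios
    have hq : ∀ A : ℝ, A / S = (A / n) / (S / n) := by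
      intro A
      rw [div_div_div_eq]
      rw [mul_comm (A) (↑n)]
      rw [mul_div_mul_left _ _ hnne]
    have hr_low : (∑ i ∈ range n, g2 cp (X i ω)) / S ≤ topSum n M (fun i => |X i ω|) / S :=
      (div_le_div_iff_of_pos_right hSpos).2 hlow
    have hr_up : topSum n M (fun i => |X i ω|) / S ≤ (∑ i ∈ range n, g2 cm (X i ω)) / S :=
      (div_le_div_iff_of_pos_right hSpos).2 hup
    rw [hq (∑ i ∈ range n, g2 cp (X i ω))] at hr_low
    rw [hq (∑ i ∈ range n, g2 cm (X i ω))] at hr_up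
    rw [Real.dist_eq, abs_sub_lt_iff]
    constructor <;> linarith only [h5n, h6n, hr_low, hr_up, hLcpdiv, hLcmdiv, hε]
  -- conclusion: convergence in probability
  refine ⟨1, one_pos, fun ε hε _ => ?_⟩
  have hmeasF : ∀ N : ℕ, AEStronglyMeasurable
      (fun ω => topSum N ⌊γ * N⌋₊ (fun i => |X i ω|) / ∑ i ∈ Finset.range N, |X i ω|) μ := by
    intro N
    apply Measurable.aestronglyMeasurable
    apply Measurable.div
    · simp only [topSum]
      split_ifs with h
      · have heq : (fun ω => ((Finset.range N).powersetCard ⌊γ * N⌋₊).sup' h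
            (fun T => ∑ i ∈ T, |X i ω|)) =
            ((Finset.range N).powersetCard ⌊γ * N⌋₊).sup' h (fun T ω => ∑ i ∈ T, |X i ω|) := by
          funext ω
          rw [Finset.sup'_apply]
        rw [heq]
        exact Finset.measurable_sup' h (fun T _ => Finset.measurable_sum T
          fun i _ => (hmeas i).abs)
      · exact measurable_const
    · exact Finset.measurable_sum _ fun i _ => (hmeas i).abs
  have htim := tendstoInMeasure_of_tendsto_ae (f := fun N ω =>
      topSum N ⌊γ * N⌋₊ (fun i => |X i ω|) / ∑ i ∈ Finset.range N, |X i ω|)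
      (g := fun _ => ρ) hmeasF hae
  have hsq := (tendstoInMeasure_iff_dist.1 htim) ε hε
  apply tendsto_of_tendsto_of_tendsto_of_le_of_le tendsto_const_nhds hsq
  · intro N
    exact zero_le
  · intro N
    apply measure_mono
    intro ω hω
    rw [Set.mem_setOf_eq, Real.dist_eq]
    exact le_of_lt hω
end

section
/- Let r be a nonnegative integer, c₁, c₂ > 0, x₀ > 0, and let f : ℝ → ℝ be a nonnegative measurable function with ∫_0^∞ f(x) dx = 1/2 and c₁·x^r ≤ f(x) ≤ c₂·x^r for all x ∈ (0, x₀]. Then there exist C > 0 and t₀ > 0 such that for every t ∈ (0, t₀] and every a ≥ 0 with ∫_a^∞ f(x) dx = 1/2 − t, one has ∫_0^a x f(x) dx ≤ C · t^{(r+2)/(r+1)}. -/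
open MeasureTheory

/-- If `c₁ x^r ≤ f(x) ≤ c₂ x^r` near the origin and `∫₀^∞ f = 1/2`, then for all sufficiently
small `t > 0` and any `a ≥ 0` with `∫_a^∞ f = 1/2 − t`, one has
`∫₀^a x f(x) dx ≤ C t^{(r+2)/(r+1)}` for some constant `C > 0`. -/
theorem stmt14 (r : ℕ) (c₁ c₂ x₀ : ℝ) (hc₁ : 0 < c₁) (hc₂ : 0 < c₂) (hx₀ : 0 < x₀)
    (f : ℝ → ℝ) (hmeas : Measurable f) (hnonneg : ∀ x, 0 ≤ f x)
    (hhalf : (∫ x in Set.Ioi (0 : ℝ), f x) = 1 / 2)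
    (hlow : ∀ x ∈ Set.Ioc (0 : ℝ) x₀, c₁ * x ^ r ≤ f x)
    (hupp : ∀ x ∈ Set.Ioc (0 : ℝ) x₀, f x ≤ c₂ * x ^ r) :
    ∃ C > 0, ∃ t₀ > 0, ∀ t ∈ Set.Ioc (0 : ℝ) t₀, ∀ a : ℝ, 0 ≤ a →
      (∫ x in Set.Ioi a, f x) = 1 / 2 - t →
      (∫ x in Set.Ioc (0 : ℝ) a, x * f x) ≤ C * t ^ (((r : ℝ) + 2) / ((r : ℝ) + 1)) := by
  have hr1 : (0:ℝ) < (r:ℝ) + 1 := by positivity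
  -- integrability of f on (0,∞)
  have hint : IntegrableOn f (Set.Ioi (0:ℝ)) := by
    by_contra h
    rw [integral_undef h] at hhalf
    norm_num at hhalf
  refine ⟨(((r:ℝ)+1)/c₁) ^ ((1:ℝ)/((r:ℝ)+1)), by positivity,
    c₁ * x₀ ^ (r+1) / ((r:ℝ)+1) / 2, by positivity, ?_⟩
  rintro t ⟨ht0, ht1⟩ a ha hQ
  -- compute ∫_{(0,a]} f = t
  have hintIoc : IntegrableOn f (Set.Ioc (0:ℝ) a) :=
    hint.mono_set (Set.Ioc_subset_Ioi_self)
  have hintIoi : IntegrableOn f (Set.Ioi a) :=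
    hint.mono_set (Set.Ioi_subset_Ioi ha)
  have hsplit : (∫ x in Set.Ioc (0:ℝ) a, f x) + (∫ x in Set.Ioi a, f x)
      = ∫ x in Set.Ioi (0:ℝ), f x := by
    rw [← setIntegral_union (Set.Ioc_disjoint_Ioi le_rfl) measurableSet_Ioi hintIoc hintIoi,
      Set.Ioc_union_Ioi_eq_Ioi ha]
  have hIa : (∫ x in Set.Ioc (0:ℝ) a, f x) = t := by
    rw [hhalf, hQ] at hsplit; linarith
  -- lower bound integral of c₁ x^r on (0, b]
  have key : ∀ b : ℝ, 0 ≤ b → b ≤ x₀ →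
      c₁ * b ^ (r+1) / ((r:ℝ)+1) ≤ ∫ x in Set.Ioc (0:ℝ) b, f x := by
    intro b hb hbx
    have hc : ∫ x in Set.Ioc (0:ℝ) b, c₁ * x ^ r = c₁ * b ^ (r+1) / ((r:ℝ)+1) := by
      rw [← intervalIntegral.integral_of_le hb]
      rw [intervalIntegral.integral_const_mul, integral_pow]
      push_cast; ring
    rw [← hc]
    refine setIntegral_mono_on ((continuous_const.mul (continuous_pow r)).integrableOn_Ioc)
      (hint.mono_set Set.Ioc_subset_Ioi_self) measurableSet_Ioc ?_
    intro x hx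
    exact hlow x ⟨hx.1, hx.2.trans hbx⟩
  -- a ≤ x₀
  have hax : a ≤ x₀ := by
    by_contra h
    push_neg at h
    have h1 : c₁ * x₀ ^ (r+1) / ((r:ℝ)+1) ≤ ∫ x in Set.Ioc (0:ℝ) x₀, f x :=
      key x₀ hx₀.le le_rfl
    have h2 : (∫ x in Set.Ioc (0:ℝ) x₀, f x) ≤ ∫ x in Set.Ioc (0:ℝ) a, f x := by
      refine setIntegral_mono_set hintIoc ?_ ?_
      · exact Filter.Eventually.of_forall hnonneg
      · exact Filter.Eventually.of_forall (Set.Ioc_subset_Ioc le_rfl h.le)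
    rw [hIa] at h2
    linarith
  -- t ≥ c₁ a^{r+1}/(r+1)
  have hta : c₁ * a ^ (r+1) / ((r:ℝ)+1) ≤ t := by
    have := key a ha hax
    rwa [hIa] at this
  -- upper bound: ∫ x f ≤ a t
  have hub : (∫ x in Set.Ioc (0:ℝ) a, x * f x) ≤ a * t := by
    rw [← hIa, ← integral_const_mul]
    refine setIntegral_mono_on ?_ (hintIoc.const_mul a) measurableSet_Ioc ?_
    · refine Integrable.mono' (hintIoc.const_mul a) ?_ ?_
      · exact (measurable_id.mul hmeas).aestronglyMeasurable
      · filter_upwards [ae_restrict_mem measurableSet_Ioc] with x hx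
        rw [Real.norm_of_nonneg (mul_nonneg hx.1.le (hnonneg x))]
        exact mul_le_mul_of_nonneg_right hx.2 (hnonneg x)
    · intro x hx
      exact mul_le_mul_of_nonneg_right hx.2 (hnonneg x)
  -- rpow algebra
  have hC : (0:ℝ) < (((r:ℝ)+1)/c₁) ^ ((1:ℝ)/((r:ℝ)+1)) := by positivity
  have h1 : (a:ℝ) ^ ((r:ℝ)+1) ≤ ((r:ℝ)+1) * t / c₁ := by
    rw [le_div_iff₀ hc₁]
    have : (a:ℝ) ^ ((r:ℝ)+1) = a ^ (r+1) := by
      rw [← Real.rpow_natCast a (r+1)]; push_cast; ring_nf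
    rw [this]
    rw [div_le_iff₀ hr1] at hta
    linarith
  have haub : a ≤ (((r:ℝ)+1)/c₁) ^ ((1:ℝ)/((r:ℝ)+1)) * t ^ ((1:ℝ)/((r:ℝ)+1)) := by
    have h2 : (a ^ ((r:ℝ)+1)) ^ ((1:ℝ)/((r:ℝ)+1)) ≤ (((r:ℝ)+1) * t / c₁) ^ ((1:ℝ)/((r:ℝ)+1)) :=
      Real.rpow_le_rpow (Real.rpow_nonneg ha _) h1 (by positivity)
    have h3 : (a ^ ((r:ℝ)+1)) ^ ((1:ℝ)/((r:ℝ)+1)) = a := by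
      rw [← Real.rpow_mul ha, mul_one_div, div_self hr1.ne', Real.rpow_one]
    have h4 : (((r:ℝ)+1) * t / c₁) ^ ((1:ℝ)/((r:ℝ)+1))
        = (((r:ℝ)+1)/c₁) ^ ((1:ℝ)/((r:ℝ)+1)) * t ^ ((1:ℝ)/((r:ℝ)+1)) := by
      rw [← Real.mul_rpow (by positivity) ht0.le]
      congr 1; field_simp
    rw [h3, h4] at h2
    exact h2
  calc (∫ x in Set.Ioc (0:ℝ) a, x * f x) ≤ a * t := hub
    _ ≤ ((((r:ℝ)+1)/c₁) ^ ((1:ℝ)/((r:ℝ)+1)) * t ^ ((1:ℝ)/((r:ℝ)+1))) * t :=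
        mul_le_mul_of_nonneg_right haub ht0.le
    _ = (((r:ℝ)+1)/c₁) ^ ((1:ℝ)/((r:ℝ)+1)) * t ^ (((r:ℝ)+2)/((r:ℝ)+1)) := by
        rw [mul_assoc]
        congr 1
        rw [show ((r:ℝ)+2)/((r:ℝ)+1) = (1:ℝ)/((r:ℝ)+1) + 1 by field_simp; ring,
          Real.rpow_add ht0, Real.rpow_one]
end
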